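/- arXiv:1508.02439 — 12 statements merged into one kernel-verified Lean document; each statement's English description precedes it below -/
import Mathlib

section
/- Let A ∈ ℝ_{≥0}^{m×n} be a nonnegative matrix in which every column has a nonzero entry, and let opt = min{𝟙ᵀx : x ∈ ℝⁿ, x ≥ 0, Ax ≥ 𝟙} be the optimal value of the covering LP given by A. For each i ∈ [n] let m_i = min{A_{ji} : A_{ji} > 0}, r_i = max{A_{ji} : A_{ji} > 0}/m_i, and n_i = max(1, ⌈log₂ r_i⌉). Define the matrix Ā with columns indexed by pairs (i,l), i ∈ [n], l ∈ {1,…,n_i}, by Ā_{j,(i,l)} = min{A_{ji}, 2^l·m_i}, and let opt‾ = min{Σ_{i,l} x̄_{(i,l)} : x̄ ≥ 0, Āx̄ ≥ 𝟙, and x̄_{(i,l)} ≤ 2/(2^l·m_i) for every (i,l)}. Then opt = opt‾. -/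
/-- Diameter reduction for covering LPs: the diameter-reduced covering LP given by `Ā`
(with coefficients capped at powers of two times the column minimum, and upper bounds
on the variables) has the same optimal value as the original covering LP given by `A`. -/
theorem diameter_reduction_equiv
    (m n : ℕ) (A : Matrix (Fin m) (Fin n) ℝ)
    (hA : ∀ j i, 0 ≤ A j i)
    (hcol : ∀ i, ∃ j, 0 < A j i)
    (mi Mi : Fin n → ℝ)
    (hmi : ∀ i, IsLeast {a : ℝ | 0 < a ∧ ∃ j, A j i = a} (mi i))
    (hMi : ∀ i, IsGreatest {a : ℝ | 0 < a ∧ ∃ j, A j i = a} (Mi i))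
    (ni : Fin n → ℕ)
    (hni : ∀ i, ni i = max 1 ⌈Real.logb 2 (Mi i / mi i)⌉₊)
    (Abar : Fin m → ((i : Fin n) × Fin (ni i)) → ℝ)
    (hAbar : ∀ (j : Fin m) (i : Fin n) (l : Fin (ni i)),
      Abar j ⟨i, l⟩ = min (A j i) (2 ^ (l.1 + 1) * mi i))
    (opt optbar : ℝ)
    (hopt : IsLeast {c : ℝ | ∃ x : Fin n → ℝ, (∀ i, 0 ≤ x i) ∧
      (∀ j, 1 ≤ ∑ i, A j i * x i) ∧ c = ∑ i, x i} opt)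
    (hoptbar : IsLeast {c : ℝ | ∃ x : ((i : Fin n) × Fin (ni i)) → ℝ,
      (∀ p, 0 ≤ x p) ∧ (∀ j, 1 ≤ ∑ p, Abar j p * x p) ∧
      (∀ (i : Fin n) (l : Fin (ni i)), x ⟨i, l⟩ ≤ 2 / (2 ^ (l.1 + 1) * mi i)) ∧
      c = ∑ p, x p} optbar) :
    opt = optbar := by
  classical
  have hsig : ∀ f : ((i : Fin n) × Fin (ni i)) → ℝ,
      ∑ p, f p = ∑ i, ∑ l : Fin (ni i), f ⟨i, l⟩ := by
    intro f
    rw [← Finset.univ_sigma_univ, Finset.sum_sigma]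
  have hmipos : ∀ i, 0 < mi i := fun i => (hmi i).1.1
  have hmi_le_A : ∀ j i, 0 < A j i → mi i ≤ A j i := fun j i h => (hmi i).2 ⟨h, j, rfl⟩
  have hA_le_Mi : ∀ j i, 0 < A j i → A j i ≤ Mi i := fun j i h => (hMi i).2 ⟨h, j, rfl⟩
  have hmM : ∀ i, mi i ≤ Mi i := fun i => (hMi i).2 (hmi i).1
  have hni1 : ∀ i, 1 ≤ ni i := fun i => by rw [hni i]; exact le_max_left _ _
  have hMle : ∀ i, Mi i ≤ 2 ^ ni i * mi i := by
    intro i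
    have hm := hmipos i
    have hMpos : 0 < Mi i / mi i := div_pos (lt_of_lt_of_le hm (hmM i)) hm
    have hlog : Real.logb 2 (Mi i / mi i) ≤ (ni i : ℝ) := by
      calc Real.logb 2 (Mi i / mi i) ≤ (⌈Real.logb 2 (Mi i / mi i)⌉₊ : ℝ) := Nat.le_ceil _
        _ ≤ (ni i : ℝ) := by
            exact_mod_cast Nat.cast_le.2 (by rw [hni i]; exact le_max_right _ _)
    have h2 : Mi i / mi i ≤ (2 : ℝ) ^ (ni i : ℝ) := by
      calc Mi i / mi i = (2 : ℝ) ^ Real.logb 2 (Mi i / mi i) :=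
            (Real.rpow_logb (by norm_num) (by norm_num) hMpos).symm
        _ ≤ (2 : ℝ) ^ (ni i : ℝ) := Real.rpow_le_rpow_of_exponent_le one_le_two hlog
    rw [Real.rpow_natCast] at h2
    calc Mi i = (Mi i / mi i) * mi i := by field_simp
      _ ≤ 2 ^ ni i * mi i := mul_le_mul_of_nonneg_right h2 hm.le
  obtain ⟨⟨xb, hxb0, hxbc, hxbub, hxbs⟩, hbarlb⟩ := hoptbar
  obtain ⟨⟨x, hx0, hxc, hxs⟩, hlb⟩ := hopt
  have h1 : opt ≤ optbar := by
    apply hlb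
    refine ⟨fun i => ∑ l : Fin (ni i), xb ⟨i, l⟩, fun i => Finset.sum_nonneg fun l _ => hxb0 _,
      ?_, ?_⟩
    · intro j
      calc (1 : ℝ) ≤ ∑ p, Abar j p * xb p := hxbc j
        _ = ∑ i, ∑ l : Fin (ni i), Abar j ⟨i, l⟩ * xb ⟨i, l⟩ := hsig _
        _ ≤ ∑ i, ∑ l : Fin (ni i), A j i * xb ⟨i, l⟩ := by
            refine Finset.sum_le_sum fun i _ => Finset.sum_le_sum fun l _ => ?_
            exact mul_le_mul_of_nonneg_right (by rw [hAbar]; exact min_le_left _ _) (hxb0 _)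
        _ = ∑ i, A j i * ∑ l : Fin (ni i), xb ⟨i, l⟩ := by
            simp [Finset.mul_sum]
    · rw [hxbs, hsig]
  have h2 : optbar ≤ opt := by
    set P : Fin n → ℕ → Prop := fun i l => 2 ^ l * (mi i * x i) ≤ 2 with hPdef
    set L : Fin n → ℕ := fun i => max 1 (Nat.findGreatest (P i) (ni i)) with hLdef
    have hL1 : ∀ i, 1 ≤ L i := fun i => le_max_left _ _
    have hLni : ∀ i, L i ≤ ni i := fun i => max_le (hni1 i) (Nat.findGreatest_le _)
    set c : Fin n → ℝ := fun i => 2 ^ L i * mi i with hcdef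
    have hcpos : ∀ i, 0 < c i := fun i => mul_pos (by positivity) (hmipos i)
    set y : Fin n → ℝ := fun i => min (x i) (2 / c i) with hydef
    have hy0 : ∀ i, 0 ≤ y i := fun i => le_min (hx0 i) (div_nonneg (by norm_num) (hcpos i).le)
    have hyx : ∀ i, y i ≤ x i := fun i => min_le_left _ _
    set xbar : ((i : Fin n) × Fin (ni i)) → ℝ :=
      fun p => if p.2.1 + 1 = L p.1 then y p.1 else 0 with hxbardef
    have hl0 : ∀ i, L i - 1 < ni i := fun i => by
      have := hL1 i; have := hLni i; omega
    have hc_eq : ∀ i, c i = 2 ^ L i * mi i := fun _ => rfl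
    have hxbar_eq : ∀ p : (i : Fin n) × Fin (ni i),
        xbar p = if p.2.1 + 1 = L p.1 then y p.1 else 0 := fun _ => rfl
    -- key pointwise inequality
    have hkey : ∀ j i, min (A j i * x i) 1 ≤ min (A j i) (c i) * y i := by
      intro j i
      by_cases hA0 : A j i = 0
      · rw [hA0, zero_mul, min_eq_left (hcpos i).le, zero_mul]
        exact min_le_left _ _
      have hApos : 0 < A j i := lt_of_le_of_ne (hA j i) (Ne.symm hA0)
      have hmA : mi i ≤ A j i := hmi_le_A j i hApos
      rcases le_or_gt (x i) (2 / c i) with hx2 | hx2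
      · have hy : y i = x i := min_eq_left hx2
        rcases le_or_gt 1 (c i * x i) with hc1 | hc1
        · rw [hy]
          calc min (A j i * x i) 1 ≤ min (A j i * x i) (c i * x i) :=
                min_le_min le_rfl hc1
            _ = min (A j i) (c i) * x i := (min_mul_of_nonneg _ _ (hx0 i)).symm
        · -- c i * x i < 1 : then L i = ni i and A j i ≤ c i
          have hcx2 : c i * x i ≤ 2 := by
            rw [mul_comm]
            exact (le_div_iff₀ (hcpos i)).mp hx2
          have hPL : P i (L i) := by
            simp only [hPdef]
            calc 2 ^ L i * (mi i * x i) = c i * x i := by rw [hc_eq]; ring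
              _ ≤ 2 := hcx2
          have hLk : L i ≤ Nat.findGreatest (P i) (ni i) :=
            Nat.le_findGreatest (hLni i) hPL
          have hLeq : L i = ni i := by
            by_contra hne
            have hlt : L i < ni i := lt_of_le_of_ne (hLni i) hne
            have hkL : Nat.findGreatest (P i) (ni i) ≤ L i := le_max_right _ _
            have hnP : ¬ P i (L i + 1) :=
              Nat.findGreatest_is_greatest (n := ni i) (by omega) (by omega)
            apply hnP
            simp only [hPdef]
            calc 2 ^ (L i + 1) * (mi i * x i) = 2 * (c i * x i) := by rw [hc_eq]; ring
              _ ≤ 2 * 1 := by linarith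
              _ = 2 := by ring
          have hAc : A j i ≤ c i := by
            calc A j i ≤ Mi i := hA_le_Mi j i hApos
              _ ≤ 2 ^ ni i * mi i := hMle i
              _ = c i := by rw [hc_eq, hLeq]
          rw [hy, min_eq_left hAc]
          exact min_le_left _ _
      · -- truncation: x i > 2 / c i, show L i = 1
        have hy : y i = 2 / c i := min_eq_right hx2.le
        have hk0 : Nat.findGreatest (P i) (ni i) = 0 := by
          by_contra hk
          have hkpos : 0 < Nat.findGreatest (P i) (ni i) := Nat.pos_of_ne_zero hk
          have hLk : L i = Nat.findGreatest (P i) (ni i) := by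
            simp only [hLdef]; omega
          have hPk : P i (Nat.findGreatest (P i) (ni i)) :=
            Nat.findGreatest_of_ne_zero rfl hk
          rw [← hLk] at hPk
          simp only [hPdef] at hPk
          have : c i * x i ≤ 2 := by
            calc c i * x i = 2 ^ L i * (mi i * x i) := by rw [hc_eq]; ring
              _ ≤ 2 := hPk
          have : 2 < c i * x i := by
            rw [div_lt_iff₀ (hcpos i)] at hx2
            linarith [hx2]
          linarith
        have hLeq : L i = 1 := by simp only [hLdef]; omega
        have hc2m : c i = 2 * mi i := by rw [hc_eq, hLeq]; ring
        have hterm : (1 : ℝ) ≤ min (A j i) (c i) * y i := by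
          rw [hy, hc2m]
          have hmin : mi i ≤ min (A j i) (2 * mi i) :=
            le_min hmA (by linarith [hmipos i])
          have hmne := (hmipos i).ne'
          calc (1 : ℝ) = mi i * (2 / (2 * mi i)) := by field_simp
            _ ≤ min (A j i) (2 * mi i) * (2 / (2 * mi i)) :=
                mul_le_mul_of_nonneg_right hmin
                  (div_nonneg (by norm_num) (by linarith [hmipos i]))
        exact le_trans (min_le_right _ _) hterm
    have hmem : (∑ p, xbar p) ∈ {c : ℝ | ∃ x : ((i : Fin n) × Fin (ni i)) → ℝ,
        (∀ p, 0 ≤ x p) ∧ (∀ j, 1 ≤ ∑ p, Abar j p * x p) ∧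
        (∀ (i : Fin n) (l : Fin (ni i)), x ⟨i, l⟩ ≤ 2 / (2 ^ (l.1 + 1) * mi i)) ∧
        c = ∑ p, x p} := by
      refine ⟨xbar, ?_, ?_, ?_, rfl⟩
      · intro p
        rw [hxbar_eq]
        split
        · exact hy0 _
        · exact le_rfl
      · intro j
        have hrow : ∑ p, Abar j p * xbar p = ∑ i, min (A j i) (c i) * y i := by
          rw [hsig]
          refine Finset.sum_congr rfl fun i _ => ?_
          rw [Finset.sum_eq_single (⟨L i - 1, hl0 i⟩ : Fin (ni i))]
          · have h1 : L i - 1 + 1 = L i := by have := hL1 i; omega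
            show Abar j ⟨i, ⟨L i - 1, hl0 i⟩⟩ *
                (if L i - 1 + 1 = L i then y i else 0) = min (A j i) (c i) * y i
            rw [hAbar, h1, if_pos rfl, hc_eq]
          · intro l _ hl
            have : l.1 + 1 ≠ L i := by
              intro hEq
              apply hl
              apply Fin.ext
              simp only []
              omega
            rw [hxbar_eq]
            simp only [if_neg this, mul_zero]
          · intro h; exact absurd (Finset.mem_univ _) h
        rw [hrow]
        have hterms : ∀ i, (0 : ℝ) ≤ min (A j i * x i) 1 :=
          fun i => le_min (mul_nonneg (hA j i) (hx0 i)) one_pos.le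
        have hmid : (1 : ℝ) ≤ ∑ i, min (A j i * x i) 1 := by
          by_cases hex : ∃ i, 1 ≤ A j i * x i
          · obtain ⟨i, hi⟩ := hex
            calc (1 : ℝ) = min (A j i * x i) 1 := (min_eq_right hi).symm
              _ ≤ ∑ i, min (A j i * x i) 1 :=
                  Finset.single_le_sum (fun i _ => hterms i) (Finset.mem_univ i)
          · push_neg at hex
            calc (1 : ℝ) ≤ ∑ i, A j i * x i := hxc j
              _ = ∑ i, min (A j i * x i) 1 :=
                  Finset.sum_congr rfl fun i _ => (min_eq_left (hex i).le).symm
        calc (1 : ℝ) ≤ ∑ i, min (A j i * x i) 1 := hmid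
          _ ≤ ∑ i, min (A j i) (c i) * y i := Finset.sum_le_sum fun i _ => hkey j i
      · intro i l
        by_cases h : l.1 + 1 = L i
        · rw [hxbar_eq]
          simp only [if_pos h]
          have hcl : (2 : ℝ) ^ (l.1 + 1) * mi i = c i := by rw [hc_eq, h]
          rw [hcl]
          exact min_le_right _ _
        · rw [hxbar_eq]
          simp only [if_neg h]
          exact div_nonneg (by norm_num) (mul_pos (by positivity) (hmipos i)).le
    have hub := hbarlb hmem
    have hsum : ∑ p, xbar p ≤ opt := by
      rw [hsig, hxs]
      refine Finset.sum_le_sum fun i _ => ?_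
      rw [Finset.sum_eq_single (⟨L i - 1, hl0 i⟩ : Fin (ni i))]
      · rw [hxbar_eq]
        have h1 : L i - 1 + 1 = L i := by have := hL1 i; omega
        simp only []
        rw [if_pos h1]
        exact hyx i
      · intro l _ hl
        have : l.1 + 1 ≠ L i := by
          intro hEq
          apply hl
          apply Fin.ext
          simp only []
          omega
        rw [hxbar_eq]
        simp only [if_neg this]
      · intro h; exact absurd (Finset.mem_univ _) h
    linarith
  linarith
end

section
/- Let m, n ≥ 1, let A ∈ ℝ_{≥0}^{m×n} be normalized so that min_{j∈[m]} max_{i∈[n]} A_{ji} = 1, let opt be the optimal value of the covering LP given by A, let ε ∈ (0, 1/2], and set μ = ε/(4 log(nm/ε)). Let x* be an optimal solution of the covering LP (x* ≥ 0, Ax* ≥ 𝟙, 𝟙ᵀx* = opt) and let u* = (1 + ε/2)x*. Then f_μ(u*) ≤ (1 + ε)·opt, where f_μ(x) = 𝟙ᵀx + μΣ_{j=1}^m exp((1 − (Ax)_j)/μ). -/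
set_option maxHeartbeats 1000000 in
/-- With `μ = ε/(4 log(nm/ε))` and `u* = (1 + ε/2)x*` for an optimal solution `x*` of the
covering LP, the smoothed objective satisfies `f_μ(u*) ≤ (1 + ε)·opt`. -/
theorem smoothing_at_ustar
    (m n : ℕ) (hm : 0 < m) (hn : 0 < n)
    (A : Matrix (Fin m) (Fin n) ℝ) (hA : ∀ j i, 0 ≤ A j i)
    (hnorm : (Finset.univ.inf' ⟨⟨0, hm⟩, Finset.mem_univ _⟩
        fun j => Finset.univ.sup' ⟨⟨0, hn⟩, Finset.mem_univ _⟩ fun i => A j i) = 1)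
    (opt : ℝ)
    (hopt : IsLeast {c : ℝ | ∃ x : Fin n → ℝ, (∀ i, 0 ≤ x i) ∧
      (∀ j, 1 ≤ ∑ i, A j i * x i) ∧ c = ∑ i, x i} opt)
    (ε : ℝ) (hε0 : 0 < ε) (hε1 : ε ≤ 1/2)
    (μ : ℝ) (hμ : μ = ε / (4 * Real.log ((n : ℝ) * m / ε)))
    (xstar : Fin n → ℝ) (hx0 : ∀ i, 0 ≤ xstar i)
    (hxf : ∀ j, 1 ≤ ∑ i, A j i * xstar i) (hxopt : ∑ i, xstar i = opt) :
    (∑ i, (1 + ε/2) * xstar i) +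
      μ * ∑ j, Real.exp ((1 - ∑ i, A j i * ((1 + ε/2) * xstar i)) / μ)
    ≤ (1 + ε) * opt := by
  -- basic numeric facts
  have hn1 : (1:ℝ) ≤ (n:ℝ) := by exact_mod_cast hn
  have hm1 : (1:ℝ) ≤ (m:ℝ) := by exact_mod_cast hm
  have hnm1 : (1:ℝ) ≤ (n:ℝ) * m := by nlinarith
  have hEpos : (0:ℝ) < (n:ℝ) * m / ε := by positivity
  have h2E : (2:ℝ) ≤ (n:ℝ) * m / ε := by
    rw [le_div_iff₀ hε0]; nlinarith
  set L := Real.log ((n:ℝ) * m / ε) with hLdef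
  clear_value L
  have hlog2 : (0.6931471803:ℝ) < Real.log 2 := Real.log_two_gt_d9
  have hL2 : Real.log 2 ≤ L := hLdef ▸ Real.log_le_log (by norm_num) h2E
  have hLpos : (0:ℝ) < L := by linarith
  have hμpos : 0 < μ := by rw [hμ]; positivity
  -- opt ≥ 1
  have Hex := Finset.exists_mem_eq_inf'
    (⟨⟨0, hm⟩, Finset.mem_univ _⟩ : (Finset.univ : Finset (Fin m)).Nonempty)
    (fun j => Finset.univ.sup' ⟨⟨0, hn⟩, Finset.mem_univ _⟩ fun i => A j i)
  rw [hnorm] at Hex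
  obtain ⟨j0, -, hj0⟩ := Hex
  have hA1 : ∀ i, A j0 i ≤ 1 := by
    intro i
    rw [hj0]
    exact Finset.le_sup' _ (Finset.mem_univ i)
  have hopt1 : 1 ≤ opt := by
    calc 1 ≤ ∑ i, A j0 i * xstar i := hxf j0
    _ ≤ ∑ i, xstar i := by
        apply Finset.sum_le_sum
        intro i _
        nlinarith [hx0 i, hA1 i, hA j0 i]
    _ = opt := hxopt
  -- exp term bound
  have hμL : μ = ε / (4 * L) := by rw [hμ]
  have hexpL : Real.exp L = (n:ℝ) * m / ε := hLdef ▸ Real.exp_log hEpos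
  have hEinv : ((n:ℝ) * m / ε)⁻¹ = ε / ((n:ℝ) * m) := by
    field_simp
  have hexpbound : ∀ j : Fin m,
      Real.exp ((1 - ∑ i, A j i * ((1 + ε/2) * xstar i)) / μ)
        ≤ (ε / ((n:ℝ) * m))^2 := by
    intro j
    have hsum : (1 + ε/2) * 1 ≤ (1 + ε/2) * ∑ i, A j i * xstar i :=
      mul_le_mul_of_nonneg_left (hxf j) (by linarith)
    have hsum2 : ∑ i, A j i * ((1 + ε/2) * xstar i)
        = (1 + ε/2) * ∑ i, A j i * xstar i := by
      rw [Finset.mul_sum]; congr 1; funext i; ring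
    have harg : (1 - ∑ i, A j i * ((1 + ε/2) * xstar i)) / μ ≤ -(2 * L) := by
      rw [hsum2]
      rw [div_le_iff₀ hμpos, hμL]
      have h4L : (0:ℝ) < 4 * L := by linarith
      have heq : -(2*L) * (ε / (4*L)) = -(ε/2) := by
        field_simp
        ring
      rw [heq]
      linarith [hsum]
    calc Real.exp ((1 - ∑ i, A j i * ((1 + ε/2) * xstar i)) / μ)
        ≤ Real.exp (-(2*L)) := Real.exp_le_exp.mpr harg
      _ = (ε / ((n:ℝ) * m))^2 := by
          rw [show -(2*L) = -L + -L by ring, Real.exp_add, Real.exp_neg, hexpL, hEinv]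
          ring
  have hsumexp : ∑ j, Real.exp ((1 - ∑ i, A j i * ((1 + ε/2) * xstar i)) / μ)
      ≤ (m:ℝ) * (ε / ((n:ℝ) * m))^2 := by
    calc ∑ j, Real.exp ((1 - ∑ i, A j i * ((1 + ε/2) * xstar i)) / μ)
        ≤ ∑ _j : Fin m, (ε / ((n:ℝ) * m))^2 :=
          Finset.sum_le_sum fun j _ => hexpbound j
      _ = (m:ℝ) * (ε / ((n:ℝ) * m))^2 := by
          rw [Finset.sum_const, Finset.card_univ, Fintype.card_fin, nsmul_eq_mul]
  -- first term
  have hfirst : ∑ i, (1 + ε/2) * xstar i = (1 + ε/2) * opt := by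
    rw [← Finset.mul_sum, hxopt]
  rw [hfirst]
  -- final bound: μ * (m * (ε/(nm))^2) ≤ (ε/2) * opt
  have hkey : μ * ((m:ℝ) * (ε / ((n:ℝ) * m))^2) ≤ (ε/2) * opt := by
    have h1 : (ε / ((n:ℝ) * m))^2 = ε^2 / ((n:ℝ)^2 * (m:ℝ)^2) := by
      rw [div_pow]; ring_nf
    have hnm2 : (1:ℝ) ≤ (n:ℝ)^2 * m := by nlinarith
    have hn0 : ((n:ℝ)) ≠ 0 := by linarith
    have hm0 : ((m:ℝ)) ≠ 0 := by linarith
    have h2 : (m:ℝ) * (ε / ((n:ℝ) * m))^2 ≤ ε^2 := by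
      have key : (m:ℝ) * (ε / ((n:ℝ) * m))^2 = ε^2 / ((n:ℝ)^2 * m) := by
        field_simp
      rw [key, div_le_iff₀ (by positivity)]
      nlinarith [mul_nonneg (sq_nonneg ε) (by linarith : (0:ℝ) ≤ (n:ℝ)^2 * m - 1)]
    have hμle : μ ≤ ε / (4 * Real.log 2) := by
      have hb : (0:ℝ) < 4 * Real.log 2 := by linarith
      rw [hμL, div_le_div_iff₀ (by linarith : (0:ℝ) < 4 * L) hb]
      nlinarith
    have hμε : μ * ε^2 ≤ ε / 2 := by
      have hε2 : ε^2 ≤ 1/4 := by nlinarith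
      have hμsmall : μ ≤ 1 := by
        calc μ ≤ ε / (4 * Real.log 2) := hμle
        _ ≤ 1 := by rw [div_le_one (by linarith)]; linarith
      nlinarith [hμpos.le]
    calc μ * ((m:ℝ) * (ε / ((n:ℝ) * m))^2) ≤ μ * ε^2 :=
        mul_le_mul_of_nonneg_left h2 hμpos.le
      _ ≤ ε / 2 := hμε
      _ ≤ (ε/2) * opt := by nlinarith
  have : μ * ∑ j, Real.exp ((1 - ∑ i, A j i * ((1 + ε/2) * xstar i)) / μ)
      ≤ (ε/2) * opt := le_trans (mul_le_mul_of_nonneg_left hsumexp hμpos.le) hkey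
  linarith
end

section
/- Let m, n ≥ 1, let A ∈ ℝ_{≥0}^{m×n} be normalized so that min_{j∈[m]} max_{i∈[n]} A_{ji} = 1, let opt be the optimal value of the covering LP given by A, let ε ∈ (0, 1/2], and set μ = ε/(4 log(nm/ε)). Then for every x ∈ ℝⁿ with x ≥ 0, f_μ(x) ≥ (1 − ε)·opt, where f_μ(x) = 𝟙ᵀx + μΣ_{j=1}^m exp((1 − (Ax)_j)/μ). -/
set_option maxHeartbeats 1000000 in
/-- With `μ = ε/(4 log(nm/ε))`, the smoothed objective satisfies
`f_μ(x) ≥ (1 − ε)·opt` for every `x ≥ 0`. -/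
theorem smoothing_lower_bound
    (m n : ℕ) (hm : 0 < m) (hn : 0 < n)
    (A : Matrix (Fin m) (Fin n) ℝ) (hA : ∀ j i, 0 ≤ A j i)
    (hnorm : (Finset.univ.inf' ⟨⟨0, hm⟩, Finset.mem_univ _⟩
        fun j => Finset.univ.sup' ⟨⟨0, hn⟩, Finset.mem_univ _⟩ fun i => A j i) = 1)
    (opt : ℝ)
    (hopt : IsLeast {c : ℝ | ∃ x : Fin n → ℝ, (∀ i, 0 ≤ x i) ∧
      (∀ j, 1 ≤ ∑ i, A j i * x i) ∧ c = ∑ i, x i} opt)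
    (ε : ℝ) (hε0 : 0 < ε) (hε1 : ε ≤ 1/2)
    (μ : ℝ) (hμ : μ = ε / (4 * Real.log ((n : ℝ) * m / ε))) :
    ∀ x : Fin n → ℝ, (∀ i, 0 ≤ x i) →
      (1 - ε) * opt ≤ (∑ i, x i) + μ * ∑ j, Real.exp ((1 - ∑ i, A j i * x i) / μ) := by
  intro x hx
  have hn1 : (1:ℝ) ≤ (n:ℝ) := by exact_mod_cast hn
  have hm1 : (1:ℝ) ≤ (m:ℝ) := by exact_mod_cast hm
  set t : ℝ := (n : ℝ) * m / ε with ht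
  have ht2 : (2:ℝ) ≤ t := by
    rw [ht, le_div_iff₀ hε0]; nlinarith
  have hlt : 0 < Real.log t := Real.log_pos (by linarith)
  have hμ0 : 0 < μ := by rw [hμ]; positivity
  -- opt ≥ 0
  have hopt0 : 0 ≤ opt := by
    obtain ⟨⟨y, hy0, hy1, hyc⟩, _⟩ := hopt
    rw [hyc]; exact Finset.sum_nonneg fun i _ => hy0 i
  -- every row sum is ≥ 1 when x = 1
  have hrow : ∀ j : Fin m, (1:ℝ) ≤ ∑ i, A j i * (1:ℝ) := by
    intro j
    have h1 : (1:ℝ) ≤ Finset.univ.sup' ⟨⟨0, hn⟩, Finset.mem_univ _⟩ fun i => A j i := by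
      rw [← hnorm]; exact Finset.inf'_le _ (Finset.mem_univ j)
    obtain ⟨i0, -, hi0⟩ := Finset.exists_mem_eq_sup' ⟨⟨0, hn⟩, Finset.mem_univ _⟩
      (fun i => A j i)
    rw [hi0] at h1
    calc (1:ℝ) ≤ A j i0 := h1
      _ = A j i0 * 1 := by ring
      _ ≤ ∑ i, A j i * 1 := Finset.single_le_sum
          (fun i _ => mul_nonneg (hA j i) zero_le_one) (Finset.mem_univ i0)
  -- opt ≤ n
  have hoptn : opt ≤ (n:ℝ) := by
    have hmem : (n:ℝ) ∈ {c : ℝ | ∃ y : Fin n → ℝ, (∀ i, 0 ≤ y i) ∧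
        (∀ j, 1 ≤ ∑ i, A j i * y i) ∧ c = ∑ i, y i} :=
      ⟨fun _ => 1, fun _ => zero_le_one, hrow, by simp⟩
    exact hopt.2 hmem
  -- the minimum row value
  have hne : (Finset.univ : Finset (Fin m)).Nonempty := ⟨⟨0, hm⟩, Finset.mem_univ _⟩
  set a : ℝ := Finset.univ.inf' hne (fun j => ∑ i, A j i * x i) with ha
  have ha0 : 0 ≤ a :=
    Finset.le_inf' hne _ (fun j _ => Finset.sum_nonneg fun i _ =>
      mul_nonneg (hA j i) (hx i))
  have hale : ∀ j : Fin m, a ≤ ∑ i, A j i * x i := fun j =>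
    Finset.inf'_le _ (Finset.mem_univ j)
  have hS0 : 0 ≤ ∑ i, x i := Finset.sum_nonneg fun i _ => hx i
  -- scaling: a * opt ≤ ∑ x
  have hscale : a * opt ≤ ∑ i, x i := by
    rcases eq_or_lt_of_le ha0 with h | h
    · rw [← h]; simpa using hS0
    · have hmem : (∑ i, x i / a) ∈ {c : ℝ | ∃ y : Fin n → ℝ, (∀ i, 0 ≤ y i) ∧
        (∀ j, 1 ≤ ∑ i, A j i * y i) ∧ c = ∑ i, y i} := by
        refine ⟨fun i => x i / a, fun i => div_nonneg (hx i) ha0, fun j => ?_, rfl⟩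
        have : ∑ i, A j i * (x i / a) = (∑ i, A j i * x i) / a := by
          rw [Finset.sum_div]; exact Finset.sum_congr rfl fun i _ => by ring
        rw [this, le_div_iff₀ h, one_mul]; exact hale j
      have := hopt.2 hmem
      rw [← Finset.sum_div] at this
      calc a * opt ≤ a * ((∑ i, x i) / a) := by
            exact mul_le_mul_of_nonneg_left this ha0
        _ = ∑ i, x i := by field_simp
  -- exp terms nonneg, and sum ≥ exp at the argmin
  have hexp0 : 0 ≤ ∑ j, Real.exp ((1 - ∑ i, A j i * x i) / μ) :=
    Finset.sum_nonneg fun j _ => (Real.exp_pos _).le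
  by_cases hcase : 1 - ε ≤ a
  · calc (1 - ε) * opt ≤ a * opt := mul_le_mul_of_nonneg_right hcase hopt0
      _ ≤ ∑ i, x i := hscale
      _ ≤ _ := by nlinarith
  · push_neg at hcase
    -- key: μ * exp(ε/μ) ≥ n
    have hεμ : ε / μ = 4 * Real.log t := by
      rw [hμ]; field_simp
    have hexpεμ : Real.exp (ε / μ) = t ^ (4:ℕ) := by
      rw [hεμ]
      rw [show (4:ℝ) * Real.log t = (4:ℕ) * Real.log t by norm_num,
        Real.exp_nat_mul, Real.exp_log (by linarith)]
    have hlogle : Real.log t ≤ t - 1 := Real.log_le_sub_one_of_pos (by linarith)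
    have hkey : (n:ℝ) ≤ μ * Real.exp (ε / μ) := by
      rw [hexpεμ, hμ]
      rw [div_mul_eq_mul_div, le_div_iff₀ (by positivity)]
      have hnεt : (n:ℝ) ≤ ε * t := by
        rw [ht]; field_simp; nlinarith
      have h1 : (n:ℝ) * (4 * Real.log t) ≤ ε * t * (4 * Real.log t) :=
        mul_le_mul_of_nonneg_right hnεt (by positivity)
      have h2 : ε * t * (4 * Real.log t) ≤ ε * t * (4 * (t - 1)) :=
        mul_le_mul_of_nonneg_left (by linarith) (by positivity)
      have htc : 4 * (t - 1) ≤ t ^ 3 := by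
        nlinarith [mul_nonneg (mul_nonneg (by linarith : (0:ℝ) ≤ t - 2)
          (by linarith : (0:ℝ) ≤ t)) (by linarith : (0:ℝ) ≤ t + 2)]
      have h3 : ε * t * (4 * (t - 1)) ≤ ε * t * t ^ 3 :=
        mul_le_mul_of_nonneg_left htc (by positivity)
      have h4 : ε * t * t ^ 3 = ε * t ^ 4 := by ring
      linarith
    -- find argmin j0
    obtain ⟨j0, -, hj0⟩ := Finset.exists_mem_eq_inf' hne (fun j => ∑ i, A j i * x i)
    have hsumexp : Real.exp ((1 - a) / μ) ≤ ∑ j, Real.exp ((1 - ∑ i, A j i * x i) / μ) := by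
      have : Real.exp ((1 - a) / μ) = Real.exp ((1 - ∑ i, A j0 i * x i) / μ) := by
        rw [ha, hj0]
      rw [this]
      exact Finset.single_le_sum (f := fun j => Real.exp ((1 - ∑ i, A j i * x i) / μ))
        (fun j _ => (Real.exp_pos _).le) (Finset.mem_univ j0)
    have hmono : Real.exp (ε / μ) ≤ Real.exp ((1 - a) / μ) := by
      apply Real.exp_le_exp.2
      have h1 : (0:ℝ) < 1 - a - ε := by linarith
      have h2 : (1 - a) / μ - ε / μ = (1 - a - ε) / μ := by ring
      linarith [div_pos h1 hμ0]
    have hbig : opt ≤ μ * ∑ j, Real.exp ((1 - ∑ i, A j i * x i) / μ) := by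
      calc opt ≤ (n:ℝ) := hoptn
        _ ≤ μ * Real.exp (ε / μ) := hkey
        _ ≤ μ * Real.exp ((1 - a) / μ) := mul_le_mul_of_nonneg_left hmono hμ0.le
        _ ≤ _ := mul_le_mul_of_nonneg_left hsumexp hμ0.le
    calc (1 - ε) * opt ≤ a * opt + opt := by nlinarith
      _ ≤ (∑ i, x i) + μ * ∑ j, Real.exp ((1 - ∑ i, A j i * x i) / μ) :=
        add_le_add hscale hbig
end

section
/- Let m, n ≥ 1, let A ∈ ℝ_{≥0}^{m×n} be normalized so that min_{j∈[m]} max_{i∈[n]} A_{ji} = 1, let opt be the optimal value of the covering LP given by A, let ε ∈ (0, 1/2], and set μ = ε/(4 log(nm/ε)). Then every x ≥ 0 with f_μ(x) ≤ 2·opt satisfies Ax ≥ (1 − ε)·𝟙, where f_μ(x) = 𝟙ᵀx + μΣ_{j=1}^m exp((1 − (Ax)_j)/μ). -/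
set_option maxHeartbeats 1000000 in
/-- With `μ = ε/(4 log(nm/ε))`, every `x ≥ 0` with `f_μ(x) ≤ 2·opt` satisfies
`Ax ≥ (1 − ε)𝟙`. -/

theorem smoothing_near_feasible
    (m n : ℕ) (hm : 0 < m) (hn : 0 < n)
    (A : Matrix (Fin m) (Fin n) ℝ) (hA : ∀ j i, 0 ≤ A j i)
    (hnorm : (Finset.univ.inf' ⟨⟨0, hm⟩, Finset.mem_univ _⟩
        fun j => Finset.univ.sup' ⟨⟨0, hn⟩, Finset.mem_univ _⟩ fun i => A j i) = 1)
    (opt : ℝ)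
    (hopt : IsLeast {c : ℝ | ∃ x : Fin n → ℝ, (∀ i, 0 ≤ x i) ∧
      (∀ j, 1 ≤ ∑ i, A j i * x i) ∧ c = ∑ i, x i} opt)
    (ε : ℝ) (hε0 : 0 < ε) (hε1 : ε ≤ 1/2)
    (μ : ℝ) (hμ : μ = ε / (4 * Real.log ((n : ℝ) * m / ε))) :
    ∀ x : Fin n → ℝ, (∀ i, 0 ≤ x i) →
      (∑ i, x i) + μ * ∑ j, Real.exp ((1 - ∑ i, A j i * x i) / μ) ≤ 2 * opt →
      ∀ j, 1 - ε ≤ ∑ i, A j i * x i := by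
  intro x hx hf j
  by_contra hcon
  push_neg at hcon
  have hN : (1:ℝ) ≤ n := by exact_mod_cast hn
  have hM : (1:ℝ) ≤ m := by exact_mod_cast hm
  set t : ℝ := (n:ℝ) * m / ε with ht
  have ht2 : (2:ℝ) ≤ t := by
    rw [ht, le_div_iff₀ hε0]; nlinarith
  have hL : 0 < Real.log t := Real.log_pos (by linarith)
  have hμ0 : 0 < μ := by rw [hμ]; positivity
  -- every row sum of A is ≥ 1
  have hrow : ∀ j' : Fin m, (1:ℝ) ≤ ∑ i, A j' i := by
    intro j'
    have h1 : (1:ℝ) ≤ Finset.univ.sup' ⟨⟨0, hn⟩, Finset.mem_univ _⟩ fun i => A j' i := by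
      rw [← hnorm]
      exact Finset.inf'_le _ (Finset.mem_univ j')
    obtain ⟨i₀, _, hi₀⟩ := Finset.exists_mem_eq_sup' (⟨⟨0, hn⟩, Finset.mem_univ _⟩ :
      (Finset.univ : Finset (Fin n)).Nonempty) fun i => A j' i
    calc (1:ℝ) ≤ A j' i₀ := by rw [← hi₀]; exact h1
    _ ≤ ∑ i, A j' i := Finset.single_le_sum (fun i _ => hA j' i) (Finset.mem_univ i₀)
  -- opt ≤ n
  have hoptn : opt ≤ n := by
    have hmem : ((n:ℝ)) ∈ {c : ℝ | ∃ x : Fin n → ℝ, (∀ i, 0 ≤ x i) ∧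
        (∀ j, 1 ≤ ∑ i, A j i * x i) ∧ c = ∑ i, x i} := by
      refine ⟨fun _ => 1, fun _ => zero_le_one, fun j' => ?_, by simp⟩
      simpa using hrow j'
    exact hopt.2 hmem
  have hxn : (0:ℝ) ≤ ∑ i, x i := Finset.sum_nonneg fun i _ => hx i
  have hsingle : Real.exp ((1 - ∑ i, A j i * x i) / μ) ≤
      ∑ j', Real.exp ((1 - ∑ i, A j' i * x i) / μ) :=
    Finset.single_le_sum (f := fun j' => Real.exp ((1 - ∑ i, A j' i * x i) / μ))
      (fun j' _ => (Real.exp_pos _).le) (Finset.mem_univ j)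
  have hstrict : Real.exp (ε / μ) < Real.exp ((1 - ∑ i, A j i * x i) / μ) := by
    apply Real.exp_lt_exp.2
    gcongr
    linarith
  have hεμ : ε / μ = 4 * Real.log t := by
    rw [hμ]; field_simp
  have hexp4 : Real.exp (ε / μ) = t ^ 4 := by
    rw [hεμ, show (4:ℝ) * Real.log t = Real.log (t ^ 4) by rw [Real.log_pow]; push_cast; ring]
    exact Real.exp_log (by positivity)
  have hkey : 2 * (n:ℝ) ≤ μ * t ^ 4 := by
    rw [hμ, div_mul_eq_mul_div, le_div_iff₀ (by positivity)]
    have hlog : Real.log t ≤ t - 1 := Real.log_le_sub_one_of_pos (by linarith)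
    have htε : ε * t = (n:ℝ) * m := by rw [ht]; field_simp
    have hfac : 0 ≤ (t - 2) * (t ^ 2 + 2 * t - 4) := by nlinarith
    nlinarith [mul_le_mul_of_nonneg_left hlog (show (0:ℝ) ≤ 8 * n by linarith),
      mul_le_mul_of_nonneg_left (show 8 * t - 8 ≤ t ^ 3 by nlinarith)
        (show (0:ℝ) ≤ (n:ℝ) by linarith),
      mul_le_mul_of_nonneg_right hM (show (0:ℝ) ≤ (n:ℝ) * t ^ 3 by positivity), htε]
  have h2 : μ * Real.exp ((1 - ∑ i, A j i * x i) / μ) ≤ 2 * opt := by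
    have := mul_le_mul_of_nonneg_left hsingle hμ0.le
    linarith
  have h3 : μ * Real.exp (ε / μ) < μ * Real.exp ((1 - ∑ i, A j i * x i) / μ) :=
    mul_lt_mul_of_pos_left hstrict hμ0
  have h4 : μ * t ^ 4 = μ * Real.exp (ε / μ) := by rw [hexp4]
  linarith
end

section
/- Let m, n ≥ 1, let A ∈ ℝ_{≥0}^{m×n} be normalized so that min_{j∈[m]} max_{i∈[n]} A_{ji} = 1, let opt be the optimal value of the covering LP given by A, let ε ∈ (0, 1/2], and set μ = ε/(4 log(nm/ε)). Suppose x ≥ 0 and c ≥ 0 satisfy f_μ(x) ≤ (1 + cε)·opt and (1 + cε) ≤ 2, where f_μ(x) = 𝟙ᵀx + μΣ_{j=1}^m exp((1 − (Ax)_j)/μ). Then the vector x/(1 − ε) is feasible for the covering LP (A(x/(1−ε)) ≥ 𝟙) and satisfies 𝟙ᵀ(x/(1 − ε)) ≤ ((1 + cε)/(1 − ε))·opt. -/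
set_option maxHeartbeats 800000

/-- With `μ = ε/(4 log(nm/ε))`, if `x ≥ 0` satisfies `f_μ(x) ≤ (1 + cε)·opt ≤ 2·opt`,
then `x/(1−ε)` is feasible for the covering LP and has objective value at most
`((1 + cε)/(1 − ε))·opt`. -/
theorem smoothing_approx_solution
    (m n : ℕ) (hm : 0 < m) (hn : 0 < n)
    (A : Matrix (Fin m) (Fin n) ℝ) (hA : ∀ j i, 0 ≤ A j i)
    (hnorm : (Finset.univ.inf' ⟨⟨0, hm⟩, Finset.mem_univ _⟩
        fun j => Finset.univ.sup' ⟨⟨0, hn⟩, Finset.mem_univ _⟩ fun i => A j i) = 1)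
    (opt : ℝ)
    (hopt : IsLeast {c : ℝ | ∃ x : Fin n → ℝ, (∀ i, 0 ≤ x i) ∧
      (∀ j, 1 ≤ ∑ i, A j i * x i) ∧ c = ∑ i, x i} opt)
    (ε : ℝ) (hε0 : 0 < ε) (hε1 : ε ≤ 1/2)
    (μ : ℝ) (hμ : μ = ε / (4 * Real.log ((n : ℝ) * m / ε)))
    (x : Fin n → ℝ) (hx0 : ∀ i, 0 ≤ x i)
    (c : ℝ) (hc : 0 ≤ c)
    (hfx : (∑ i, x i) + μ * ∑ j, Real.exp ((1 - ∑ i, A j i * x i) / μ) ≤ (1 + c * ε) * opt)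
    (hc2 : 1 + c * ε ≤ 2) :
    (∀ j, 1 ≤ ∑ i, A j i * (x i / (1 - ε))) ∧
    (∑ i, x i / (1 - ε)) ≤ ((1 + c * ε) / (1 - ε)) * opt := by
  have hε1' : ε < 1 := lt_of_le_of_lt hε1 (by norm_num)
  have h1ε : (0:ℝ) < 1 - ε := by linarith
  have hn1 : (1:ℝ) ≤ (n:ℝ) := by exact_mod_cast hn
  have hm1 : (1:ℝ) ≤ (m:ℝ) := by exact_mod_cast hm
  set T : ℝ := (n:ℝ) * m / ε with hT
  have hT2 : 2 ≤ T := by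
    rw [hT, le_div_iff₀ hε0]; nlinarith
  have hTpos : 0 < T := by linarith
  set L : ℝ := Real.log T with hL
  have hLpos : 0 < L := Real.log_pos (by linarith)
  have hμpos : 0 < μ := by rw [hμ]; positivity
  have hTε : T * ε = (n:ℝ) * m := div_mul_cancel₀ _ (ne_of_gt hε0)
  -- opt ≥ 1
  obtain ⟨⟨x0, hx00, hx0f, hx0s⟩, hlb⟩ := hopt
  have hopt1 : 1 ≤ opt := by
    have hex := Finset.exists_mem_eq_inf' (s := (Finset.univ : Finset (Fin m)))
      ⟨⟨0, hm⟩, Finset.mem_univ _⟩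
      (fun j => Finset.univ.sup' ⟨⟨0, hn⟩, Finset.mem_univ _⟩ fun i => A j i)
    obtain ⟨j0, hj0mem, hj0⟩ := hex
    have hsup1 : (Finset.univ.sup' ⟨⟨0, hn⟩, Finset.mem_univ _⟩ fun i => A j0 i) = 1 := by
      rw [← hj0]; exact hnorm
    have hle1 : ∀ i, A j0 i ≤ 1 := by
      intro i
      calc A j0 i ≤ _ := Finset.le_sup' (fun i => A j0 i) (Finset.mem_univ i)
        _ = 1 := hsup1
    have : (1:ℝ) ≤ ∑ i, x0 i := by
      calc (1:ℝ) ≤ ∑ i, A j0 i * x0 i := hx0f j0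
        _ ≤ ∑ i, x0 i := by
          apply Finset.sum_le_sum
          intro i _
          nlinarith [hle1 i, hx00 i, hA j0 i]
    linarith [hx0s ▸ this]
  have hoptpos : 0 < opt := by linarith
  -- opt ≤ n
  have hoptn : opt ≤ (n:ℝ) := by
    have : (n:ℝ) ∈ {c : ℝ | ∃ x : Fin n → ℝ, (∀ i, 0 ≤ x i) ∧
        (∀ j, 1 ≤ ∑ i, A j i * x i) ∧ c = ∑ i, x i} := by
      refine ⟨fun _ => 1, fun i => zero_le_one, fun j => ?_, by simp⟩
      obtain ⟨i0, -, hi0⟩ := Finset.exists_mem_eq_sup'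
        ⟨⟨0, hn⟩, Finset.mem_univ _⟩ (fun i => A j i)
      have h1le : (1:ℝ) ≤ A j i0 := by
        rw [← hi0, ← hnorm]
        exact Finset.inf'_le _ (Finset.mem_univ j)
      calc (1:ℝ) ≤ A j i0 * 1 := by linarith
        _ ≤ ∑ i, A j i * 1 := Finset.single_le_sum (f := fun i => A j i * 1)
            (fun i _ => by simpa using hA j i) (Finset.mem_univ i0)
    exact hlb this
  -- log estimate
  have hLT : L ≤ T - 1 := Real.log_le_sub_one_of_pos hTpos
  have h8 : 8 * (T - 1) ≤ T ^ 3 := by nlinarith [sq_nonneg (T - 2), hT2]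
  have hmain : 8 * opt * L ≤ T ^ 4 * ε := by
    have hoptT : opt ≤ T * ε := by rw [hTε]; nlinarith
    have h1 : opt * L ≤ (T * ε) * (T - 1) :=
      mul_le_mul hoptT hLT hLpos.le (by positivity)
    nlinarith [mul_le_mul_of_nonneg_left h8 (by positivity : (0:ℝ) ≤ T * ε)]
  have hkey : 2 * opt / μ ≤ T ^ 4 := by
    rw [hμ, div_div_eq_mul_div, div_le_iff₀ hε0]
    ring_nf at hmain ⊢
    linarith
  have hexpT : Real.exp (4 * L) = T ^ 4 := by
    rw [show (4:ℝ) * L = L + L + L + L by ring, Real.exp_add, Real.exp_add,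
      Real.exp_add, Real.exp_log hTpos]; ring
  have hxsum0 : (0:ℝ) ≤ ∑ i, x i := Finset.sum_nonneg fun i _ => hx0 i
  have hfeas : ∀ j, 1 - ε ≤ ∑ i, A j i * x i := by
    intro j
    have hterm : μ * Real.exp ((1 - ∑ i, A j i * x i) / μ) ≤ 2 * opt := by
      have h1 : Real.exp ((1 - ∑ i, A j i * x i) / μ)
          ≤ ∑ j, Real.exp ((1 - ∑ i, A j i * x i) / μ) :=
        Finset.single_le_sum (f := fun k => Real.exp ((1 - ∑ i, A k i * x i) / μ))
          (fun k _ => (Real.exp_pos _).le) (Finset.mem_univ j)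
      have h2 : μ * Real.exp ((1 - ∑ i, A j i * x i) / μ)
          ≤ μ * ∑ j, Real.exp ((1 - ∑ i, A j i * x i) / μ) :=
        mul_le_mul_of_nonneg_left h1 hμpos.le
      have h3 : (1 + c * ε) * opt ≤ 2 * opt := by nlinarith
      linarith
    have hexp_le : Real.exp ((1 - ∑ i, A j i * x i) / μ) ≤ Real.exp (4 * L) := by
      rw [hexpT]
      calc Real.exp ((1 - ∑ i, A j i * x i) / μ) ≤ 2 * opt / μ := by
            rw [le_div_iff₀ hμpos]; linarith [hterm]
        _ ≤ T ^ 4 := hkey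
    have hdiv : (1 - ∑ i, A j i * x i) / μ ≤ 4 * L := Real.exp_le_exp.mp hexp_le
    have h4Lμ : 4 * L * μ = ε := by rw [hμ]; field_simp
    have := (div_le_iff₀ hμpos).mp hdiv
    linarith
  constructor
  · intro j
    have : ∑ i, A j i * (x i / (1 - ε)) = (∑ i, A j i * x i) / (1 - ε) := by
      rw [Finset.sum_div]; apply Finset.sum_congr rfl; intro i _; ring
    rw [this, le_div_iff₀ h1ε]
    linarith [hfeas j]
  · have : ∑ i, x i / (1 - ε) = (∑ i, x i) / (1 - ε) := (Finset.sum_div _ _ _).symm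
    rw [this, div_le_iff₀ h1ε]
    have hexps : (0:ℝ) ≤ μ * ∑ j, Real.exp ((1 - ∑ i, A j i * x i) / μ) := by
      apply mul_nonneg hμpos.le
      exact Finset.sum_nonneg fun j _ => (Real.exp_pos _).le
    have hxle : (∑ i, x i) ≤ (1 + c * ε) * opt := by linarith
    calc (∑ i, x i) ≤ (1 + c * ε) * opt := hxle
      _ = (1 + c * ε) / (1 - ε) * opt * (1 - ε) := by field_simp
end

section
/- Let μ > 0, A ∈ ℝ_{≥0}^{m×n}, f_μ(x) = 𝟙ᵀx + μΣ_{j=1}^m exp((1 − (Ax)_j)/μ), and fix i ∈ [n] with the i-th column of A nonzero; write ‖A_{:i}‖_∞ = max_j A_{ji}. Then for every x ∈ ℝⁿ with x ≥ 0 and every γ ∈ ℝ, |log((1 − ∇_i f_μ(x + γe_i))/(1 − ∇_i f_μ(x)))| ≤ (‖A_{:i}‖_∞/μ)·|γ|, where e_i is the i-th standard basis vector. (Here 1 − ∇_i f_μ(y) = Σ_j A_{ji} exp((1 − (Ay)_j)/μ) > 0, so the logarithm is well defined.) -/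
/-- Local Lipschitz property of the gradient in logarithmic form: for all `x ≥ 0` and `γ`,
`|log((1 − ∇_i f_μ(x + γe_i))/(1 − ∇_i f_μ(x)))| ≤ (‖A_{:i}‖_∞/μ)·|γ|`, where
`1 − ∇_i f_μ(y) = Σ_j A_{ji} exp((1 − (Ay)_j)/μ)`. -/
theorem gradient_log_lipschitz
    (m n : ℕ) (μ : ℝ) (hμ : 0 < μ)
    (A : Matrix (Fin m) (Fin n) ℝ) (hA : ∀ j i, 0 ≤ A j i)
    (i : Fin n) (hcoli : ∃ j, 0 < A j i)
    (Anormi : ℝ) (hAnormi : IsGreatest {a : ℝ | ∃ j, A j i = a} Anormi)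
    (x : Fin n → ℝ) (hx : ∀ k, 0 ≤ x k) (γ : ℝ) :
    |Real.log
        ((∑ j, A j i * Real.exp ((1 - ∑ k, A j k * Function.update x i (x i + γ) k) / μ)) /
         (∑ j, A j i * Real.exp ((1 - ∑ k, A j k * x k) / μ)))|
      ≤ (Anormi / μ) * |γ| := by
  obtain ⟨j₀, hj₀⟩ := hcoli
  set c : ℝ := Anormi / μ * |γ| with hc
  have hAnorm_ub : ∀ j, A j i ≤ Anormi := fun j => hAnormi.2 ⟨j, rfl⟩
  -- inner sum simplification
  have hsum : ∀ j, (∑ k, A j k * Function.update x i (x i + γ) k)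
      = (∑ k, A j k * x k) + A j i * γ := by
    intro j
    have : ∀ k, A j k * Function.update x i (x i + γ) k
        = A j k * x k + (if k = i then A j i * γ else 0) := by
      intro k
      by_cases hk : k = i
      · subst hk; simp [Function.update_self]; ring
      · simp [Function.update_of_ne hk, hk]
    simp only [this, Finset.sum_add_distrib, Finset.sum_ite_eq' Finset.univ i
      (fun _ => A j i * γ), Finset.mem_univ, if_true]
  set S : ℝ := ∑ j, A j i * Real.exp ((1 - ∑ k, A j k * x k) / μ) with hS
  set N : ℝ := ∑ j, A j i * Real.exp ((1 - ∑ k, A j k * Function.update x i (x i + γ) k) / μ)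
    with hN
  have hterm_nonneg : ∀ j, 0 ≤ A j i * Real.exp ((1 - ∑ k, A j k * x k) / μ) := fun j =>
    mul_nonneg (hA j i) (Real.exp_pos _).le
  have hSpos : 0 < S := by
    apply Finset.sum_pos' (fun j _ => hterm_nonneg j)
    exact ⟨j₀, Finset.mem_univ _, mul_pos hj₀ (Real.exp_pos _)⟩
  have hfactor : ∀ j, |A j i * γ / μ| ≤ c := by
    intro j
    rw [abs_div, abs_of_pos hμ, abs_mul, abs_of_nonneg (hA j i), hc, div_mul_eq_mul_div,
      div_le_div_iff_of_pos_right hμ]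
    exact mul_le_mul_of_nonneg_right (hAnorm_ub j) (abs_nonneg γ)
  have hNexp : ∀ j, A j i * Real.exp ((1 - ∑ k, A j k * Function.update x i (x i + γ) k) / μ)
      = A j i * Real.exp ((1 - ∑ k, A j k * x k) / μ) * Real.exp (-(A j i * γ / μ)) := by
    intro j
    rw [hsum j, mul_assoc, ← Real.exp_add]
    ring_nf
  have hupper : N ≤ Real.exp c * S := by
    rw [hN, hS, Finset.mul_sum]
    apply Finset.sum_le_sum
    intro j _
    rw [hNexp j]
    calc A j i * Real.exp ((1 - ∑ k, A j k * x k) / μ) * Real.exp (-(A j i * γ / μ))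
        ≤ A j i * Real.exp ((1 - ∑ k, A j k * x k) / μ) * Real.exp c := by
          apply mul_le_mul_of_nonneg_left _ (hterm_nonneg j)
          exact Real.exp_le_exp.2 (le_trans (neg_le_abs _) (by simpa [abs_neg] using hfactor j))
      _ = Real.exp c * (A j i * Real.exp ((1 - ∑ k, A j k * x k) / μ)) := by ring
  have hlower : Real.exp (-c) * S ≤ N := by
    rw [hN, hS, Finset.mul_sum]
    apply Finset.sum_le_sum
    intro j _
    rw [hNexp j]
    calc Real.exp (-c) * (A j i * Real.exp ((1 - ∑ k, A j k * x k) / μ))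
        = A j i * Real.exp ((1 - ∑ k, A j k * x k) / μ) * Real.exp (-c) := by ring
      _ ≤ A j i * Real.exp ((1 - ∑ k, A j k * x k) / μ) * Real.exp (-(A j i * γ / μ)) := by
          apply mul_le_mul_of_nonneg_left _ (hterm_nonneg j)
          exact Real.exp_le_exp.2 (neg_le_neg (le_trans (le_abs_self _) (hfactor j)))
  have hNpos : 0 < N := lt_of_lt_of_le (mul_pos (Real.exp_pos _) hSpos) hlower
  have hAn : 0 ≤ Anormi := le_trans (hA j₀ i) (hAnorm_ub j₀)
  have hcnn : 0 ≤ c := mul_nonneg (div_nonneg hAn hμ.le) (abs_nonneg γ)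
  rw [Real.log_div hNpos.ne' hSpos.ne', abs_le]
  constructor
  · have := Real.log_le_log (mul_pos (Real.exp_pos (-c)) hSpos) hlower
    rw [Real.log_mul (Real.exp_pos _).ne' hSpos.ne', Real.log_exp] at this
    have h2 : -c + Real.log S ≤ Real.log N := this
    linarith [h2, (le_refl (Anormi / μ * |γ|))]
  · have := Real.log_le_log hNpos hupper
    rw [Real.log_mul (Real.exp_pos _).ne' hSpos.ne', Real.log_exp] at this
    linarith
end

section
/- Let μ > 0, L = 4/μ, A ∈ ℝ_{≥0}^{m×n} with every column nonzero, and f_μ(x) = 𝟙ᵀx + μΣ_{j=1}^m exp((1 − (Ax)_j)/μ). Fix x ∈ Δ and i ∈ [n]. If ∇_i f_μ(x) ∈ (−1, 1), then for every γ ∈ ℝ with |γ| ≤ 1/(L·‖A_{:i}‖_∞), one has |∇_i f_μ(x) − ∇_i f_μ(x + γe_i)| ≤ L·‖A_{:i}‖_∞·|γ|, where e_i is the i-th standard basis vector. -/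
lemma abs_exp_sub_one_le (t : ℝ) (ht : |t| ≤ 1/4) : |Real.exp t - 1| ≤ 2 * |t| := by
  rcases le_or_gt 0 t with h | h
  · rw [abs_of_nonneg h] at ht ⊢
    have h0 : 0 ≤ Real.exp t - 1 := by
      have := Real.add_one_le_exp t; linarith
    rw [abs_of_nonneg h0]
    have hneg : 1 - t ≤ Real.exp (-t) := by
      have := Real.add_one_le_exp (-t); linarith
    have hmul : Real.exp t * Real.exp (-t) = 1 := by
      rw [← Real.exp_add]; simp
    have hle2 : Real.exp t ≤ 2 := by
      calc Real.exp t ≤ Real.exp (Real.log 2) := by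
            apply Real.exp_le_exp.2
            have := Real.log_two_gt_d9; linarith
        _ = 2 := Real.exp_log (by norm_num)
    nlinarith [Real.exp_pos t]
  · rw [abs_of_neg h]
    have h0 : Real.exp t - 1 ≤ 0 := by
      have : Real.exp t ≤ 1 := by simpa using Real.exp_le_exp.2 h.le
      linarith
    rw [abs_of_nonpos h0]
    have := Real.add_one_le_exp t
    linarith

/-- Coordinate-wise local Lipschitz continuity of the gradient (small-gradient case):
if `∇_i f_μ(x) ∈ (−1,1)` and `|γ| ≤ 1/(L‖A_{:i}‖_∞)`, then
`|∇_i f_μ(x) − ∇_i f_μ(x + γe_i)| ≤ L‖A_{:i}‖_∞|γ|`. -/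
theorem gradient_local_lipschitz_small
    (m n : ℕ) (μ L : ℝ) (hμ : 0 < μ) (hL : L = 4 / μ)
    (A : Matrix (Fin m) (Fin n) ℝ) (hA : ∀ j i, 0 ≤ A j i)
    (hcol : ∀ i, ∃ j, 0 < A j i)
    (Anorm : Fin n → ℝ)
    (hAnorm : ∀ i, IsGreatest {a : ℝ | ∃ j, A j i = a} (Anorm i))
    (x : Fin n → ℝ) (hx : ∀ k, 0 ≤ x k ∧ x k ≤ 3 / Anorm k)
    (i : Fin n)
    (h1 : -1 < 1 - ∑ j, A j i * Real.exp ((1 - ∑ k, A j k * x k) / μ))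
    (h2 : 1 - ∑ j, A j i * Real.exp ((1 - ∑ k, A j k * x k) / μ) < 1)
    (γ : ℝ) (hγ : |γ| ≤ 1 / (L * Anorm i)) :
    |(1 - ∑ j, A j i * Real.exp ((1 - ∑ k, A j k * x k) / μ)) -
     (1 - ∑ j, A j i * Real.exp ((1 - ∑ k, A j k * Function.update x i (x i + γ) k) / μ))|
      ≤ L * Anorm i * |γ| := by
  obtain ⟨j0, hj0⟩ := hcol i
  have hub : ∀ j, A j i ≤ Anorm i := fun j => (hAnorm i).2 ⟨j, rfl⟩
  have hAnormi : 0 < Anorm i := lt_of_lt_of_le hj0 (hub j0)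
  have hLpos : 0 < L := by rw [hL]; positivity
  -- rewrite the updated inner sums
  have hsum : ∀ j, ∑ k, A j k * Function.update x i (x i + γ) k
      = (∑ k, A j k * x k) + A j i * γ := by
    intro j
    have hterm : ∀ k, A j k * Function.update x i (x i + γ) k
        = A j k * x k + (if k = i then A j i * γ else 0) := by
      intro k
      by_cases hk : k = i
      · subst hk; simp [Function.update_self]; ring
      · simp [Function.update_of_ne hk, hk]
    simp only [hterm, Finset.sum_add_distrib, Finset.sum_ite_eq', Finset.mem_univ, if_true]
  -- the difference as a single sum
  have key : (1 - ∑ j, A j i * Real.exp ((1 - ∑ k, A j k * x k) / μ)) -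
      (1 - ∑ j, A j i * Real.exp ((1 - ∑ k, A j k * Function.update x i (x i + γ) k) / μ))
      = ∑ j, A j i * Real.exp ((1 - ∑ k, A j k * x k) / μ) *
          (Real.exp (-(A j i * γ) / μ) - 1) := by
    have : ∀ j ∈ Finset.univ, A j i * Real.exp ((1 - ∑ k, A j k * x k) / μ) *
          (Real.exp (-(A j i * γ) / μ) - 1)
        = A j i * Real.exp ((1 - ∑ k, A j k * Function.update x i (x i + γ) k) / μ)
          - A j i * Real.exp ((1 - ∑ k, A j k * x k) / μ) := by
      intro j _
      rw [hsum j]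
      have : (1 - ((∑ k, A j k * x k) + A j i * γ)) / μ
          = (1 - ∑ k, A j k * x k) / μ + (-(A j i * γ) / μ) := by ring
      rw [this, Real.exp_add]; ring
    rw [Finset.sum_congr rfl this, Finset.sum_sub_distrib]
    ring
  rw [key]
  -- bound each term
  have hbound : ∀ j, |A j i * Real.exp ((1 - ∑ k, A j k * x k) / μ) *
      (Real.exp (-(A j i * γ) / μ) - 1)|
      ≤ A j i * Real.exp ((1 - ∑ k, A j k * x k) / μ) * (2 * Anorm i * |γ| / μ) := by
    intro j
    rw [abs_mul, abs_of_nonneg (mul_nonneg (hA j i) (Real.exp_pos _).le)]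
    apply mul_le_mul_of_nonneg_left _ (mul_nonneg (hA j i) (Real.exp_pos _).le)
    have ht : |(-(A j i * γ) / μ)| ≤ 1/4 := by
      rw [abs_div, abs_neg, abs_mul, abs_of_nonneg (hA j i), abs_of_pos hμ]
      have h1 : A j i * |γ| ≤ Anorm i * (1 / (L * Anorm i)) := by
        apply mul_le_mul (hub j) hγ (abs_nonneg _) hAnormi.le
      have h2 : Anorm i * (1 / (L * Anorm i)) = 1 / L := by
        field_simp
      rw [h2, hL] at h1
      rw [div_le_iff₀ hμ]
      calc A j i * |γ| ≤ 1 / (4 / μ) := h1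
        _ = μ / 4 := by field_simp
        _ = 1/4 * μ := by ring
    calc |Real.exp (-(A j i * γ) / μ) - 1| ≤ 2 * |(-(A j i * γ) / μ)| :=
          abs_exp_sub_one_le _ ht
      _ = 2 * (A j i * |γ|) / μ := by
          rw [abs_div, abs_neg, abs_mul, abs_of_nonneg (hA j i), abs_of_pos hμ]; ring
      _ ≤ 2 * Anorm i * |γ| / μ := by
          rw [div_le_div_iff₀ hμ hμ]
          nlinarith [mul_le_mul_of_nonneg_right (hub j) (abs_nonneg γ), hμ]
  calc |∑ j, A j i * Real.exp ((1 - ∑ k, A j k * x k) / μ) *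
        (Real.exp (-(A j i * γ) / μ) - 1)|
      ≤ ∑ j, |A j i * Real.exp ((1 - ∑ k, A j k * x k) / μ) *
        (Real.exp (-(A j i * γ) / μ) - 1)| := Finset.abs_sum_le_sum_abs _ _
    _ ≤ ∑ j, A j i * Real.exp ((1 - ∑ k, A j k * x k) / μ) * (2 * Anorm i * |γ| / μ) :=
        Finset.sum_le_sum (fun j _ => hbound j)
    _ = (∑ j, A j i * Real.exp ((1 - ∑ k, A j k * x k) / μ)) * (2 * Anorm i * |γ| / μ) := by
        rw [← Finset.sum_mul]
    _ ≤ 2 * (2 * Anorm i * |γ| / μ) := by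
        apply mul_le_mul_of_nonneg_right (by linarith) (by positivity)
    _ = L * Anorm i * |γ| := by rw [hL]; field_simp; ring
end

section
/- Let w ∈ ℝⁿ with w_i > 0 for all i, and for x, y ∈ ℝⁿ define V_x(y) = ½·Σ_i w_i(x_i − y_i)². Let Δ ⊆ ℝⁿ be a nonempty closed convex set, let z̄ ∈ Δ, u ∈ Δ, ξ ∈ ℝⁿ, and let a > 0, L > 0 be scalars. Let z′ be the minimizer over Δ of z ↦ V_{z̄}(z) + ⟨z, a·ξ⟩, and for any x ∈ ℝⁿ set y = x + (1/(aL))·(z′ − z̄). Then ⟨a·ξ, z̄ − u⟩ ≤ a²L·⟨ξ, x − y⟩ + V_{z̄}(u) − V_{z′}(u). -/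
/-- Mirror descent step guarantee: if `z′` minimizes `z ↦ V_{z̄}(z) + ⟨z, aξ⟩` over the
closed convex set `Δ` and `y = x + (1/(aL))(z′ − z̄)`, then
`⟨aξ, z̄ − u⟩ ≤ a²L⟨ξ, x − y⟩ + V_{z̄}(u) − V_{z′}(u)`. -/
theorem mirror_descent_step
    (n : ℕ) (w : Fin n → ℝ) (hw : ∀ i, 0 < w i)
    (Δ : Set (Fin n → ℝ)) (hΔne : Δ.Nonempty) (hΔcl : IsClosed Δ) (hΔconv : Convex ℝ Δ)
    (zbar : Fin n → ℝ) (hzbar : zbar ∈ Δ)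
    (u : Fin n → ℝ) (hu : u ∈ Δ)
    (ξ : Fin n → ℝ) (a L : ℝ) (ha : 0 < a) (hL : 0 < L)
    (z' : Fin n → ℝ) (hz'mem : z' ∈ Δ)
    (hz' : IsMinOn (fun z : Fin n → ℝ =>
        (1/2) * ∑ i, w i * (zbar i - z i)^2 + ∑ i, z i * (a * ξ i)) Δ z')
    (x y : Fin n → ℝ) (hy : y = x + (1 / (a * L)) • (z' - zbar)) :
    ∑ i, (a * ξ i) * (zbar i - u i)
      ≤ a^2 * L * (∑ i, ξ i * (x i - y i))
        + (1/2) * ∑ i, w i * (zbar i - u i)^2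
        - (1/2) * ∑ i, w i * (z' i - u i)^2 := by

  subst hy
  set d : Fin n → ℝ := fun i => u i - z' i with hd
  set G : ℝ := ∑ i, d i * (w i * (z' i - zbar i) + a * ξ i) with hG
  set H : ℝ := ∑ i, (1/2) * w i * (d i)^2 with hH
  have hH0 : 0 ≤ H := Finset.sum_nonneg fun i _ => by
    have := hw i; positivity
  have hquad : ∀ t : ℝ, 0 ≤ t → t ≤ 1 → 0 ≤ t * G + t^2 * H := by
    intro t ht0 ht1
    have hmem : z' + t • (u - z') ∈ Δ := by
      have hcomb : z' + t • (u - z') = (1 - t) • z' + t • u := by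
        funext i; simp [Pi.add_apply]; ring
      rw [hcomb]
      exact hΔconv hz'mem hu (by linarith) ht0 (by ring)
    have hle := isMinOn_iff.mp hz' _ hmem
    have hexp : (1/2 : ℝ) * ∑ i, w i * (zbar i - (z' + t • (u - z')) i)^2
        + ∑ i, (z' + t • (u - z')) i * (a * ξ i)
        = ((1/2 : ℝ) * ∑ i, w i * (zbar i - z' i)^2 + ∑ i, z' i * (a * ξ i))
          + (t * G + t^2 * H) := by
      simp only [Pi.add_apply, Pi.smul_apply, Pi.sub_apply, smul_eq_mul, hG, hH, hd]
      rw [Finset.mul_sum, Finset.mul_sum, Finset.mul_sum, Finset.mul_sum,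
        ← Finset.sum_add_distrib, ← Finset.sum_add_distrib, ← Finset.sum_add_distrib,
        ← Finset.sum_add_distrib]
      exact Finset.sum_congr rfl fun i _ => by ring
    rw [hexp] at hle
    linarith
  have hG0 : 0 ≤ G := by
    by_contra hg
    push_neg at hg
    rcases eq_or_lt_of_le hH0 with hH1 | hH1
    · have := hquad 1 zero_le_one le_rfl
      nlinarith
    · set t := min 1 (-G / (2*H)) with htdef
      have ht0 : 0 < t := lt_min one_pos (div_pos (by linarith) (by linarith))
      have ht1 : t ≤ 1 := min_le_left _ _
      have ht2 : t * (2*H) ≤ -G :=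
        (le_div_iff₀ (by positivity : (0:ℝ) < 2*H)).mp (min_le_right _ _)
      have hq := hquad t ht0.le ht1
      nlinarith [mul_le_mul_of_nonneg_left ht2 ht0.le, mul_pos ht0 ht0]
  have hE0 : 0 ≤ ∑ i, (1/2 : ℝ) * w i * (zbar i - z' i)^2 :=
    Finset.sum_nonneg fun i _ => by have := hw i; positivity
  have haL : a * L ≠ 0 := by positivity
  have hid : a^2 * L * (∑ i, ξ i * (x i - (x + (1/(a*L)) • (z' - zbar)) i))
      + (1/2) * ∑ i, w i * (zbar i - u i)^2
      - (1/2) * ∑ i, w i * (z' i - u i)^2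
      - ∑ i, (a * ξ i) * (zbar i - u i)
      = G + ∑ i, (1/2 : ℝ) * w i * (zbar i - z' i)^2 := by
    simp only [Pi.add_apply, Pi.smul_apply, Pi.sub_apply, smul_eq_mul, hG, hd]
    rw [Finset.mul_sum, Finset.mul_sum, Finset.mul_sum,
      ← Finset.sum_add_distrib, ← Finset.sum_sub_distrib, ← Finset.sum_sub_distrib,
      ← Finset.sum_add_distrib]
    refine Finset.sum_congr rfl fun i _ => ?_
    field_simp
    ring
  linarith
end

section
/- Let μ > 0, L = 4/μ, A ∈ ℝ_{≥0}^{m×n} with every column nonzero, and f_μ(x) = 𝟙ᵀx + μΣ_{j=1}^m exp((1 − (Ax)_j)/μ). Fix x ∈ Δ, i ∈ [n], and write g = ∇_i f_μ(x). Suppose γ ∈ ℝ satisfies γ·g ≤ 0 and |γ| ≤ min(1, |g|)/(L·‖A_{:i}‖_∞). Then f_μ(x) − f_μ(x + γe_i) ≥ −½·g·γ, i.e., the gradient descent step y = x + γe_i satisfies f_μ(x) − f_μ(y) ≥ ½⟨∇f_μ(x), x − y⟩. -/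
private lemma gdi_aux_hgγ (g γ : ℝ) (hsign : γ * g ≤ 0) : -(g * γ) = |g| * |γ| := by
  rcases le_or_gt 0 γ with h | h
  · rcases le_or_gt 0 g with h2 | h2
    · have : γ * g = 0 := le_antisymm hsign (mul_nonneg h h2)
      rcases mul_eq_zero.mp this with h3 | h3 <;> simp [h3, abs_of_nonneg, h, h2]
    · rw [abs_of_nonneg h, abs_of_neg h2]; ring
  · rcases le_or_gt 0 g with h2 | h2
    · rw [abs_of_neg h, abs_of_nonneg h2]; ring
    · nlinarith

private lemma gdi_aux_min (g Sg : ℝ) (hSg : Sg = 1 - g) (hSgnn : 0 ≤ Sg) :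
    min 1 |g| * Sg ≤ 2 * |g| := by
  have m1 : min 1 |g| ≤ 1 := min_le_left _ _
  have m2 : min 1 |g| ≤ |g| := min_le_right _ _
  have m0 : 0 ≤ min 1 |g| := le_min zero_le_one (abs_nonneg g)
  rcases le_or_gt 0 g with h | h
  · have : |g| = g := abs_of_nonneg h
    nlinarith
  · have : |g| = -g := abs_of_neg h
    nlinarith

private lemma gdi_aux_fin (μ L B γ g Sg T : ℝ) (hμ : 0 < μ) (hL : L = 4 / μ)
    (hB : 0 < B) (hSg : Sg = 1 - g) (hSgnn : 0 ≤ Sg) (hTb : T ≤ B * Sg)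
    (hsign : γ * g ≤ 0) (hγ1 : |γ| * (L * B) ≤ min 1 |g|) :
    γ^2/μ * T ≤ -(1/2) * g * γ := by
  have hgγ := gdi_aux_hgγ g γ hsign
  have hmin := gdi_aux_min g Sg hSg hSgnn
  have h4 : L * μ = 4 := by rw [hL]; field_simp
  have k1 : |γ| * (L * B) * Sg ≤ 2 * |g| :=
    le_trans (mul_le_mul_of_nonneg_right hγ1 hSgnn) hmin
  have k2 : |γ| * (|γ| * (L * B) * Sg) ≤ |γ| * (2 * |g|) :=
    mul_le_mul_of_nonneg_left k1 (abs_nonneg γ)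
  have k3 : γ^2 * (L * B * Sg) ≤ 2 * (|g| * |γ|) := by
    have e1 : |γ| * (|γ| * (L * B) * Sg) = γ^2 * (L * B * Sg) := by
      rw [← sq_abs γ]; ring
    have e2 : |γ| * (2 * |g|) = 2 * (|g| * |γ|) := by ring
    linarith [k2]
  have key : γ^2 * (B * Sg) ≤ μ/2 * (|g| * |γ|) := by
    have h5 : μ * (γ^2 * (L * B * Sg)) ≤ μ * (2 * (|g| * |γ|)) :=
      mul_le_mul_of_nonneg_left k3 hμ.le
    have h6 : μ * (γ^2 * (L * B * Sg)) = (L * μ) * (γ^2 * (B * Sg)) := by ring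
    rw [h6, h4] at h5
    linarith
  have keyT : γ^2 * T ≤ μ/2 * (|g| * |γ|) :=
    le_trans (mul_le_mul_of_nonneg_left hTb (sq_nonneg γ)) key
  have heq2 : γ^2/μ * T = γ^2 * T / μ := by ring
  rw [heq2, div_le_iff₀ hμ]
  have heq3 : -(1/2) * g * γ * μ = μ/2 * (-(g * γ)) := by ring
  rw [heq3, hgγ]
  linarith

private lemma gdi_aux_combine (μ γ g Sg T X SP SE : ℝ)
    (hbound : μ * SE ≤ μ * SP - γ * Sg + γ^2/μ * T)
    (hSg : Sg = 1 - g) (hfin : γ^2/μ * T ≤ -(1/2) * g * γ) :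
    (X + μ * SP) - ((X + γ) + μ * SE) ≥ -(1/2) * g * γ := by
  have h : γ * Sg = γ - γ * g := by rw [hSg]; ring
  nlinarith

/-- Gradient descent improvement: if `g = ∇_i f_μ(x)`, `γ·g ≤ 0` and
`|γ| ≤ min(1,|g|)/(L‖A_{:i}‖_∞)`, then the step `y = x + γe_i` satisfies
`f_μ(x) − f_μ(y) ≥ ½⟨∇f_μ(x), x − y⟩ = −½·g·γ`. -/
theorem gradient_descent_improvement
    (m n : ℕ) (μ L : ℝ) (hμ : 0 < μ) (hL : L = 4 / μ)
    (A : Matrix (Fin m) (Fin n) ℝ) (hA : ∀ j i, 0 ≤ A j i)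
    (hcol : ∀ i, ∃ j, 0 < A j i)
    (Anorm : Fin n → ℝ)
    (hAnorm : ∀ i, IsGreatest {a : ℝ | ∃ j, A j i = a} (Anorm i))
    (x : Fin n → ℝ) (hx : ∀ k, 0 ≤ x k ∧ x k ≤ 3 / Anorm k)
    (i : Fin n) (g : ℝ)
    (hg : g = 1 - ∑ j, A j i * Real.exp ((1 - ∑ k, A j k * x k) / μ))
    (γ : ℝ) (hsign : γ * g ≤ 0)
    (hlen : |γ| ≤ min 1 |g| / (L * Anorm i)) :
    ((∑ k, x k) + μ * ∑ j, Real.exp ((1 - ∑ k, A j k * x k) / μ)) -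
      ((∑ k, Function.update x i (x i + γ) k) +
        μ * ∑ j, Real.exp ((1 - ∑ k, A j k * Function.update x i (x i + γ) k) / μ))
      ≥ -(1/2) * g * γ := by
  have hAn : 0 < Anorm i := by
    obtain ⟨j, hj⟩ := hcol i
    exact lt_of_lt_of_le hj ((hAnorm i).2 ⟨j, rfl⟩)
  have hAle : ∀ j, A j i ≤ Anorm i := fun j => (hAnorm i).2 ⟨j, rfl⟩
  have hLpos : 0 < L := by rw [hL]; positivity
  have hLA : 0 < L * Anorm i := mul_pos hLpos hAn
  set P : Fin m → ℝ := fun j => Real.exp ((1 - ∑ k, A j k * x k) / μ) with hPdef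
  have hPpos : ∀ j, 0 < P j := fun j => Real.exp_pos _
  set Sg : ℝ := ∑ j, A j i * P j with hSgdef
  set T : ℝ := ∑ j, (A j i)^2 * P j with hTdef
  clear_value P Sg T
  have hSg : Sg = 1 - g := by rw [hg]; ring
  have hSgnn : 0 ≤ Sg := by
    rw [hSgdef]
    exact Finset.sum_nonneg fun j _ => mul_nonneg (hA j i) (hPpos j).le
  have hTnn : 0 ≤ T := by
    rw [hTdef]
    exact Finset.sum_nonneg fun j _ => mul_nonneg (sq_nonneg _) (hPpos j).le
  -- γ bounds
  have hγ1 : |γ| * (L * Anorm i) ≤ min 1 |g| := by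
    rw [← le_div_iff₀ hLA]; exact hlen
  have hγ1' : |γ| * (L * Anorm i) ≤ 1 := hγ1.trans (min_le_left _ _)
  -- |γ| * Anorm i ≤ μ / 4
  have hγA : |γ| * Anorm i ≤ μ / 4 := by
    have h4 : L * μ = 4 := by rw [hL]; field_simp
    nlinarith [abs_nonneg γ, hAn, hμ]
  -- update sums
  have hupd : ∀ (c : Fin n → ℝ), ∑ k, c k * Function.update x i (x i + γ) k
      = (∑ k, c k * x k) + c i * γ := by
    intro c
    have h : ∀ k, c k * Function.update x i (x i + γ) k
        = c k * x k + (if k = i then c i * γ else 0) := by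
      intro k
      by_cases h : k = i
      · subst h; simp [Function.update]; ring
      · simp [Function.update, h]
    simp only [h, Finset.sum_add_distrib, Finset.sum_ite_eq', Finset.mem_univ, if_true]
  have h1 : ∑ k, Function.update x i (x i + γ) k = (∑ k, x k) + γ := by
    have := hupd (fun _ => 1); simpa using this
  -- exp bound
  have hexp : ∀ s : ℝ, |s| ≤ 1 → Real.exp s ≤ 1 + s + s^2 := by
    intro s hs
    have h := Real.exp_bound hs (n := 2) (by norm_num)
    have h2 : |Real.exp s - (1 + s)| ≤ s ^ 2 * (3 / (2 * 2)) := by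
      simpa [Finset.sum_range_succ, Nat.factorial] using h
    have := abs_le.mp h2
    nlinarith [sq_abs s, sq_nonneg s]
  -- pointwise bound
  have hstep : ∀ j, μ * (P j * Real.exp (-(A j i * γ) / μ))
      ≤ μ * P j - γ * (A j i * P j) + γ^2/μ * ((A j i)^2 * P j) := by
    intro j
    have habs : |(-(A j i * γ) / μ)| ≤ 1 := by
      rw [abs_div, abs_neg, abs_mul, abs_of_pos hμ, div_le_one hμ]
      have h1 : A j i * |γ| ≤ Anorm i * |γ| :=
        mul_le_mul_of_nonneg_right (hAle j) (abs_nonneg γ)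
      have h2 : |A j i| = A j i := abs_of_nonneg (hA j i)
      nlinarith [hγA, hμ]
    have he := hexp _ habs
    have hmul : P j * Real.exp (-(A j i * γ) / μ)
        ≤ P j * (1 + (-(A j i * γ) / μ) + (-(A j i * γ) / μ)^2) :=
      mul_le_mul_of_nonneg_left he (hPpos j).le
    have heq : μ * (P j * (1 + (-(A j i * γ) / μ) + (-(A j i * γ) / μ)^2))
        = μ * P j - γ * (A j i * P j) + γ^2/μ * ((A j i)^2 * P j) := by
      field_simp
      ring
    nlinarith [hmul, hμ]
  -- sum bound
  have hbound : μ * ∑ j, P j * Real.exp (-(A j i * γ) / μ)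
      ≤ μ * (∑ j, P j) - γ * Sg + γ^2/μ * T := by
    have hs := Finset.sum_le_sum (fun j (_ : j ∈ Finset.univ) => hstep j)
    calc μ * ∑ j, P j * Real.exp (-(A j i * γ) / μ)
        = ∑ j, μ * (P j * Real.exp (-(A j i * γ) / μ)) := by rw [Finset.mul_sum]
      _ ≤ ∑ j, (μ * P j - γ * (A j i * P j) + γ^2/μ * ((A j i)^2 * P j)) := hs
      _ = μ * (∑ j, P j) - γ * Sg + γ^2/μ * T := by
          rw [hSgdef, hTdef, Finset.mul_sum, Finset.mul_sum, Finset.mul_sum,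
            ← Finset.sum_sub_distrib, ← Finset.sum_add_distrib]
  -- rewrite the goal's second sum
  have hrw : ∀ j, Real.exp ((1 - ∑ k, A j k * Function.update x i (x i + γ) k) / μ)
      = P j * Real.exp (-(A j i * γ) / μ) := by
    intro j
    rw [hupd (A j), hPdef]
    rw [← Real.exp_add]
    congr 1
    ring
  simp only [hrw, h1]
  have hTb : T ≤ Anorm i * Sg := by
    rw [hSgdef, hTdef, Finset.mul_sum]
    apply Finset.sum_le_sum
    intro j _
    have h2 : A j i * (A j i * P j) ≤ Anorm i * (A j i * P j) :=
      mul_le_mul_of_nonneg_right (hAle j) (mul_nonneg (hA j i) (hPpos j).le)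
    calc A j i ^ 2 * P j = A j i * (A j i * P j) := by ring
      _ ≤ Anorm i * (A j i * P j) := h2
  exact gdi_aux_combine μ γ g Sg T _ _ _ hbound hSg
    (gdi_aux_fin μ L (Anorm i) γ g Sg T hμ hL hAn hSg hSgnn hTb hsign hγ1)
end

section
/- Let Δ ⊆ ℝⁿ be a convex set, let τ ∈ (0, 1), c > 0, and define step sizes α_0 = 1/c and α_k = α_{k−1}/(1 − τ) for k ≥ 1. Let (x_k), (y_k), (z_k) be sequences in ℝⁿ with x_0 = y_0 = z_0 ∈ Δ, z_k ∈ Δ for all k ≥ 0, and satisfying the recurrences x_k = τ·z_{k−1} + (1 − τ)·y_{k−1} and y_k = x_k + (1/(c·α_k))·(z_k − z_{k−1}) for all k ≥ 1. Then x_k ∈ Δ and y_k ∈ Δ for all k ≥ 0; in fact each y_k is a convex combination of z_0, z_1, …, z_k. -/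
noncomputable def accCoeff (τ : ℝ) (k l : ℕ) : ℝ :=
  if l = k then (1 - τ)^k else if l < k then τ * (1 - τ)^(k - 1 - l) else 0

lemma accCoeff_nonneg (τ : ℝ) (hτ0 : 0 < τ) (hτ1 : τ < 1) (k l : ℕ) :
    0 ≤ accCoeff τ k l := by
  unfold accCoeff
  have h1 : (0:ℝ) ≤ 1 - τ := by linarith
  split_ifs <;> positivity

lemma accCoeff_rec (τ : ℝ) (k l : ℕ) (hl : l < k + 1) :
    accCoeff τ (k + 1) l
      = (1 - τ) * accCoeff τ k l + (if l = k then τ - (1 - τ)^(k + 1) else 0) := by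
  unfold accCoeff
  rcases eq_or_lt_of_le (Nat.lt_succ_iff.mp hl) with h | h
  · subst h
    simp [Nat.lt_succ_self, (Nat.lt_succ_self l).ne]
    ring
  · have h1 : l ≠ k := h.ne
    have h2 : l ≠ k + 1 := by omega
    have h3 : l < k + 1 := hl
    have h4 : k - l = (k - 1 - l) + 1 := by omega
    simp [h1, h2, h3, h]
    rw [h4, pow_succ]
    ring

lemma accCoeff_sum (τ : ℝ) (k : ℕ) :
    ∑ l ∈ Finset.range (k + 1), accCoeff τ k l = 1 := by
  induction k with
  | zero => simp [accCoeff]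
  | succ k ih =>
    rw [Finset.sum_range_succ]
    have h : ∀ l ∈ Finset.range (k + 1),
        accCoeff τ (k + 1) l
          = (1 - τ) * accCoeff τ k l + (if l = k then τ - (1 - τ)^(k + 1) else 0) := by
      intro l hl
      exact accCoeff_rec τ k l (Finset.mem_range.mp hl)
    rw [Finset.sum_congr rfl h, Finset.sum_add_distrib, ← Finset.mul_sum, ih,
      Finset.sum_ite_eq' (Finset.range (k + 1)) k]
    simp [accCoeff]

/-- Feasibility invariant of the accelerated coordinate descent iterates: with
`x_k = τz_{k−1} + (1−τ)y_{k−1}` and `y_k = x_k + (1/(cα_k))(z_k − z_{k−1})`, all iterates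
`x_k, y_k` stay in the convex set `Δ`; in fact each `y_k` is a convex combination of
`z_0, …, z_k`. -/
theorem iterates_feasible
    (n : ℕ) (Δ : Set (Fin n → ℝ)) (hΔconv : Convex ℝ Δ)
    (τ : ℝ) (hτ0 : 0 < τ) (hτ1 : τ < 1)
    (c : ℝ) (hc : 0 < c)
    (α : ℕ → ℝ) (hα0 : α 0 = 1 / c) (hα : ∀ k, α (k + 1) = α k / (1 - τ))
    (x y z : ℕ → Fin n → ℝ)
    (hxy0 : x 0 = y 0) (hyz0 : y 0 = z 0)
    (hzΔ : ∀ k, z k ∈ Δ)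
    (hx : ∀ k, x (k + 1) = τ • z k + (1 - τ) • y k)
    (hy : ∀ k, y (k + 1) = x (k + 1) + (1 / (c * α (k + 1))) • (z (k + 1) - z k)) :
    (∀ k, x k ∈ Δ ∧ y k ∈ Δ) ∧
    (∀ k, ∃ coeff : ℕ → ℝ, (∀ l, 0 ≤ coeff l) ∧
      (∑ l ∈ Finset.range (k + 1), coeff l) = 1 ∧
      y k = ∑ l ∈ Finset.range (k + 1), coeff l • z l) := by
  have hτne : (1:ℝ) - τ ≠ 0 := by linarith
  -- step size identity
  have hca : ∀ k, 1 / (c * α k) = (1 - τ)^k := by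
    intro k
    induction k with
    | zero => rw [hα0]; field_simp
    | succ k ih =>
      have hne : c * α k ≠ 0 := by
        intro h
        rw [h] at ih
        have : ((1:ℝ) - τ)^k ≠ 0 := pow_ne_zero _ hτne
        simp at ih
        exact this ih.symm
      rw [hα, pow_succ]
      field_simp
      field_simp at ih
      linear_combination ih
  -- y is the explicit convex combination
  have hyc : ∀ k, y k = ∑ l ∈ Finset.range (k + 1), accCoeff τ k l • z l := by
    intro k
    induction k with
    | zero => simp [accCoeff, hyz0]
    | succ k ih =>
      rw [hy k, hx k, hca (k + 1), Finset.sum_range_succ]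
      have h : ∀ l ∈ Finset.range (k + 1),
          accCoeff τ (k + 1) l • z l
            = ((1 - τ) * accCoeff τ k l) • z l
              + (if l = k then τ - (1 - τ)^(k + 1) else 0) • z l := by
        intro l hl
        rw [accCoeff_rec τ k l (Finset.mem_range.mp hl), add_smul]
      rw [Finset.sum_congr rfl h, Finset.sum_add_distrib]
      have h2 : ∑ l ∈ Finset.range (k + 1),
          (if l = k then τ - (1 - τ)^(k + 1) else 0) • z l
          = (τ - (1 - τ)^(k + 1)) • z k := by
        rw [Finset.sum_congr rfl (fun l _ => by rw [ite_smul, zero_smul]),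
          Finset.sum_ite_eq' (Finset.range (k + 1)) k]
        simp
      rw [h2]
      have h3 : ∑ l ∈ Finset.range (k + 1), ((1 - τ) * accCoeff τ k l) • z l
          = (1 - τ) • ∑ l ∈ Finset.range (k + 1), accCoeff τ k l • z l := by
        rw [Finset.smul_sum]
        exact Finset.sum_congr rfl (fun l _ => by rw [mul_smul])
      rw [h3, ← ih]
      have h4 : accCoeff τ (k + 1) (k + 1) = (1 - τ)^(k + 1) := by simp [accCoeff]
      rw [h4]
      module
  have hyΔ : ∀ k, y k ∈ Δ := by
    intro k
    rw [hyc k]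
    exact hΔconv.sum_mem (fun l _ => accCoeff_nonneg τ hτ0 hτ1 k l)
      (accCoeff_sum τ k) (fun l _ => hzΔ l)
  refine ⟨fun k => ?_, fun k => ⟨accCoeff τ k, fun l => accCoeff_nonneg τ hτ0 hτ1 k l,
    accCoeff_sum τ k, hyc k⟩⟩
  cases k with
  | zero => exact ⟨by rw [hxy0, hyz0]; exact hzΔ 0, by rw [hyz0]; exact hzΔ 0⟩
  | succ k =>
    refine ⟨?_, hyΔ (k + 1)⟩
    rw [hx k]
    exact hΔconv (hzΔ k) (hyΔ k) hτ0.le (by linarith) (by ring)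
end

section
/- Let μ > 0, L = 4/μ, A ∈ ℝ_{≥0}^{m×n} with every column nonzero, f_μ(x) = 𝟙ᵀx + μΣ_{j=1}^m exp((1 − (Ax)_j)/μ), and let V_x(y) = ½Σ_j ‖A_{:j}‖_∞(x_j − y_j)². Fix x ∈ Δ, z̄ ∈ Δ, u ∈ Δ, i ∈ [n], and a scalar a with 0 < a ≤ 1. Write g = ∇_i f_μ(x), let ξ = max(g, −1) be the truncated gradient and η = g − ξ ≤ 0 the large component. Let z′ be the minimizer over Δ of z ↦ V_{z̄}(z) + a·ξ·z_i, and let y = x + (1/(aL))·(z′ − z̄). Then a·η·(z̄_i − u_i) + a²L·ξ·(x_i − y_i) ≤ 8aL·(f_μ(x) − f_μ(y)). -/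
lemma exp_quad {u : ℝ} (h : |u| ≤ 1) : |Real.exp u - (1 + u)| ≤ (3/4) * u^2 := by
  have := Real.exp_bound h (n := 2) (by norm_num)
  simp [Finset.sum_range_succ] at this
  calc |Real.exp u - (1 + u)| ≤ |u|^2 * (3/(2*2)) := by
        convert this using 2 <;> norm_num
    _ = (3/4) * u^2 := by rw [sq_abs]; ring

set_option maxHeartbeats 1000000 in

/-- Coupling inequality: the gradient descent improvement covers both the loss from the
large component `η` of the truncated gradient and the mirror descent regret:
`a·η·(z̄_i − u_i) + a²L·ξ·(x_i − y_i) ≤ 8aL·(f_μ(x) − f_μ(y))`. -/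
theorem coupling_loss_regret
    (m n : ℕ) (μ L : ℝ) (hμ : 0 < μ) (hL : L = 4 / μ)
    (A : Matrix (Fin m) (Fin n) ℝ) (hA : ∀ j i, 0 ≤ A j i)
    (hcol : ∀ i, ∃ j, 0 < A j i)
    (Anorm : Fin n → ℝ)
    (hAnorm : ∀ i, IsGreatest {a : ℝ | ∃ j, A j i = a} (Anorm i))
    (x zbar u : Fin n → ℝ)
    (hx : ∀ k, 0 ≤ x k ∧ x k ≤ 3 / Anorm k)
    (hzbar : ∀ k, 0 ≤ zbar k ∧ zbar k ≤ 3 / Anorm k)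
    (hu : ∀ k, 0 ≤ u k ∧ u k ≤ 3 / Anorm k)
    (i : Fin n) (a : ℝ) (ha0 : 0 < a) (ha1 : a ≤ 1)
    (g ξ η : ℝ)
    (hg : g = 1 - ∑ j, A j i * Real.exp ((1 - ∑ k, A j k * x k) / μ))
    (hξ : ξ = max g (-1)) (hη : η = g - ξ)
    (z' : Fin n → ℝ)
    (hz'mem : ∀ k, 0 ≤ z' k ∧ z' k ≤ 3 / Anorm k)
    (hz' : IsMinOn (fun z : Fin n → ℝ =>
        (1/2) * ∑ k, Anorm k * (zbar k - z k)^2 + a * ξ * z i)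
        {z : Fin n → ℝ | ∀ k, 0 ≤ z k ∧ z k ≤ 3 / Anorm k} z')
    (y : Fin n → ℝ) (hy : y = x + (1 / (a * L)) • (z' - zbar)) :
    a * η * (zbar i - u i) + a^2 * L * ξ * (x i - y i)
      ≤ 8 * a * L *
        (((∑ k, x k) + μ * ∑ j, Real.exp ((1 - ∑ k, A j k * x k) / μ)) -
         ((∑ k, y k) + μ * ∑ j, Real.exp ((1 - ∑ k, A j k * y k) / μ))) := by
  have hLpos : 0 < L := hL ▸ by positivity
  have haL : 0 < a * L := mul_pos ha0 hLpos
  have hμL : μ * L = 4 := by rw [hL]; field_simp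
  have hAn : ∀ k, 0 < Anorm k := by
    intro k
    obtain ⟨j, hj⟩ := hcol k
    exact lt_of_lt_of_le hj ((hAnorm k).2 ⟨j, rfl⟩)
  have hAle : ∀ j k, A j k ≤ Anorm k := fun j k => (hAnorm k).2 ⟨j, rfl⟩
  set P : Fin m → ℝ := fun j => Real.exp ((1 - ∑ k, A j k * x k) / μ) with hP
  have hPpos : ∀ j, 0 < P j := fun j => Real.exp_pos _
  set S : ℝ := ∑ j, A j i * P j with hSdef
  have hSg : S = 1 - g := by rw [hg]; ring
  have hS0 : 0 ≤ S := Finset.sum_nonneg fun j _ => mul_nonneg (hA j i) (hPpos j).le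
  have hg1 : g ≤ 1 := by nlinarith
  have hξlb : -1 ≤ ξ := by rw [hξ]; exact le_max_right _ _
  -- membership of coordinate updates of zbar
  have hupd : ∀ s : ℝ, 0 ≤ s → s ≤ 3 / Anorm i →
      (Function.update zbar i s) ∈ {z : Fin n → ℝ | ∀ k, 0 ≤ z k ∧ z k ≤ 3 / Anorm k} := by
    intro s hs0 hs1 k
    rcases eq_or_ne k i with hk | hk
    · subst hk; simpa using ⟨hs0, hs1⟩
    · rw [Function.update_of_ne hk]; exact hzbar k
  have hsumupd : ∀ s : ℝ, ∑ k, Anorm k * (zbar k - Function.update zbar i s k)^2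
      = Anorm i * (zbar i - s)^2 := by
    intro s
    rw [Finset.sum_eq_single i]
    · simp
    · intro k _ hk; rw [Function.update_of_ne hk]; simp
    · simp
  -- Step A : z' agrees with zbar off coordinate i
  have hzero : ∀ k, k ≠ i → z' k = zbar k := by
    have hle := isMinOn_iff.mp hz' _ (hupd (z' i) (hz'mem i).1 (hz'mem i).2)
    simp only [hsumupd, Function.update_self] at hle
    have hsplit : ∑ k, Anorm k * (zbar k - z' k)^2
        = Anorm i * (zbar i - z' i)^2 + ∑ k ∈ Finset.univ.erase i, Anorm k * (zbar k - z' k)^2 := by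
      rw [add_comm, Finset.sum_erase_add _ _ (Finset.mem_univ i)]
    have hkey : ∑ k ∈ Finset.univ.erase i, Anorm k * (zbar k - z' k)^2 ≤ 0 := by
      rw [hsplit] at hle; linarith
    have hz0 := (Finset.sum_eq_zero_iff_of_nonneg
      (fun k _ => mul_nonneg (hAn k).le (sq_nonneg _))).mp
      (le_antisymm hkey (Finset.sum_nonneg fun k _ => mul_nonneg (hAn k).le (sq_nonneg _)))
    intro k hk
    have := hz0 k (Finset.mem_erase.mpr ⟨hk, Finset.mem_univ k⟩)
    have h2 : (zbar k - z' k)^2 = 0 := by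
      rcases mul_eq_zero.mp this with h | h
      · exact absurd h (hAn k).ne'
      · exact h
    have := pow_eq_zero_iff (n := 2) (by norm_num) |>.mp h2
    linarith [sub_eq_zero.mp this]
  set t : ℝ := z' i - zbar i with htdef
  have hmin1d : ∀ s : ℝ, 0 ≤ s → s ≤ 3 / Anorm i →
      (1/2) * (Anorm i * (zbar i - z' i)^2) + a * ξ * z' i
        ≤ (1/2) * (Anorm i * (zbar i - s)^2) + a * ξ * s := by
    intro s hs0 hs1
    have hle := isMinOn_iff.mp hz' _ (hupd s hs0 hs1)
    simp only [hsumupd, Function.update_self] at hle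
    have hz'sum : ∑ k, Anorm k * (zbar k - z' k)^2 = Anorm i * (zbar i - z' i)^2 := by
      rw [Finset.sum_eq_single i]
      · intro k _ hk; rw [hzero k hk]; simp
      · simp
    rw [hz'sum] at hle
    linarith
  have hq : Anorm i * t^2 + 2 * (a * ξ * t) ≤ 0 := by
    have h2 := hmin1d (zbar i) (hzbar i).1 (hzbar i).2
    have e1 : zbar i - z' i = -t := by rw [htdef]; ring
    have e2 : z' i = zbar i + t := by rw [htdef]; ring
    rw [e1, e2, sub_self, neg_sq] at h2
    ring_nf at h2 ⊢
    nlinarith [h2]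
  set δ : ℝ := t / (a * L) with hδdef
  have hδeq : δ * (a * L) = t := div_mul_cancel₀ t haL.ne'
  have hta : t = a * L * δ := by rw [← hδeq]; ring
  have hyi : y i = x i + δ := by
    rw [hy]
    simp only [Pi.add_apply, Pi.smul_apply, Pi.sub_apply, smul_eq_mul]
    rw [hδdef, htdef]; ring
  have hyk : ∀ k, k ≠ i → y k = x k := by
    intro k hk
    rw [hy]
    simp only [Pi.add_apply, Pi.smul_apply, Pi.sub_apply, smul_eq_mul]
    rw [hzero k hk]; ring
  have hsumy : ∑ k, y k = (∑ k, x k) + δ := by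
    have e : ∀ k : Fin n, y k = x k + (if k = i then δ else 0) := by
      intro k
      rcases eq_or_ne k i with hk | hk
      · subst hk; simp [hyi]
      · simp [hyk k hk, hk]
    rw [Finset.sum_congr rfl (fun k _ => e k), Finset.sum_add_distrib]
    simp
  have hrow : ∀ j, ∑ k, A j k * y k = (∑ k, A j k * x k) + A j i * δ := by
    intro j
    have e : ∀ k : Fin n, A j k * y k = A j k * x k + (if k = i then A j i * δ else 0) := by
      intro k
      rcases eq_or_ne k i with hk | hk
      · subst hk; rw [hyi]; simp; ring
      · simp [hyk k hk, hk]
    rw [Finset.sum_congr rfl (fun k _ => e k), Finset.sum_add_distrib]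
    simp
  have hfy : ∀ j, Real.exp ((1 - ∑ k, A j k * y k) / μ)
      = P j * Real.exp (-(A j i * δ) / μ) := by
    intro j
    rw [hrow j, hP, ← Real.exp_add]
    congr 1
    field_simp
    ring
  set T : ℝ := ∑ j, P j * (1 - Real.exp (-(A j i * δ) / μ)) with hTdef
  have hD : (((∑ k, x k) + μ * ∑ j, P j) -
         ((∑ k, y k) + μ * ∑ j, Real.exp ((1 - ∑ k, A j k * y k) / μ)))
      = -δ + μ * T := by
    rw [hsumy, Finset.sum_congr rfl (fun j _ => hfy j), hTdef]
    have e : ∑ j, P j * (1 - Real.exp (-(A j i * δ) / μ))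
        = (∑ j, P j) - ∑ j, P j * Real.exp (-(A j i * δ) / μ) := by
      rw [← Finset.sum_sub_distrib]
      exact Finset.sum_congr rfl fun j _ => by ring
    rw [e]; ring
  rw [hD, hyi]
  set c : ℝ := δ / μ with hcdef
  have hδc : δ = μ * c := by rw [hcdef]; field_simp
  have hTc : T = ∑ j, P j * (1 - Real.exp (-(A j i * c))) := by
    rw [hTdef]
    refine Finset.sum_congr rfl fun j _ => ?_
    have harg : -(A j i * δ) / μ = -(A j i * c) := by rw [hδc]; field_simp
    rw [harg]
  have h2L : 2 / L = μ / 2 := by rw [hL]; field_simp; ring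
  -- |A j i * c| ≤ 1 whenever Anorm i * |δ| ≤ 2 / L
  have hujc1 : Anorm i * |δ| ≤ 2 / L → ∀ j, |A j i * c| ≤ 1 := by
    intro hAδ j
    have h1 : |A j i * δ| ≤ Anorm i * |δ| := by
      rw [abs_mul, abs_of_nonneg (hA j i)]
      exact mul_le_mul_of_nonneg_right (hAle j i) (abs_nonneg δ)
    have e : A j i * c = (A j i * δ) / μ := by rw [hcdef]; ring
    rw [e, abs_div, abs_of_pos hμ, div_le_one hμ]
    calc |A j i * δ| ≤ Anorm i * |δ| := h1
      _ ≤ 2/L := hAδ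
      _ = μ/2 := h2L
      _ ≤ μ := by linarith
  -- per-term exponential lower bound
  have hperm : (∀ j, |A j i * c| ≤ 1) → ∀ j,
      A j i * P j * c - (3/4) * (Anorm i * (A j i * P j)) * c^2
        ≤ P j * (1 - Real.exp (-(A j i * c))) := by
    intro hb j
    have h1 : Real.exp (-(A j i * c)) ≤ 1 - A j i * c + (3/4) * (A j i * c)^2 := by
      have h2 := exp_quad (u := -(A j i * c)) (by rw [abs_neg]; exact hb j)
      have h3 := le_of_abs_le h2
      nlinarith [h3]
    have H1 := mul_le_mul_of_nonneg_left h1 (hPpos j).le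
    have H2 : 0 ≤ P j * A j i * c^2 * (Anorm i - A j i) :=
      mul_nonneg (mul_nonneg (mul_nonneg (hPpos j).le (hA j i)) (sq_nonneg c))
        (sub_nonneg.2 (hAle j i))
    linarith [H1, H2]
  have hTlb : (∀ j, |A j i * c| ≤ 1) → S * c - (3/4) * (Anorm i * c^2) * S ≤ T := by
    intro hb
    rw [hTc]
    calc S * c - (3/4) * (Anorm i * c^2) * S
        = ∑ j, (A j i * P j * c - (3/4) * (Anorm i * (A j i * P j)) * c^2) := by
          rw [Finset.sum_sub_distrib, hSdef, Finset.sum_mul]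
          congr 1
          rw [Finset.mul_sum]
          refine Finset.sum_congr rfl fun j _ => by ring
      _ ≤ ∑ j, P j * (1 - Real.exp (-(A j i * c))) :=
          Finset.sum_le_sum fun j _ => hperm hb j
  clear_value c δ T t S P
  -- main case analysis
  rcases le_or_gt (-1) g with hcase | hcase
  · -- η = 0, ξ = g
    have hξg : ξ = g := by rw [hξ]; exact max_eq_left hcase
    have hηz : η = 0 := by rw [hη, hξg]; ring
    have hS2 : S ≤ 2 := by rw [hSg]; linarith
    have hξ1 : |ξ| ≤ 1 := abs_le.mpr ⟨hξlb, hξg ▸ hg1⟩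
    have hξt : ξ * t ≤ 0 := by
      have h1 : a * (ξ * t) ≤ a * 0 := by
        rw [mul_zero]; linarith [hq, mul_nonneg (hAn i).le (sq_nonneg t)]
      exact (mul_le_mul_iff_right₀ ha0).mp h1
    have hξδ : ξ * δ ≤ 0 := by
      rw [hδdef, mul_div_assoc']
      exact div_nonpos_of_nonpos_of_nonneg hξt haL.le
    have hξc : ξ * c ≤ 0 := by
      rw [hcdef, mul_div_assoc']
      exact div_nonpos_of_nonpos_of_nonneg hξδ hμ.le
    have hLd2 : Anorm i * L * δ^2 ≤ 2 * (-(ξ * δ)) := by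
      have hq' : Anorm i * (a*L*δ)^2 + 2*(a*ξ*(a*L*δ)) ≤ 0 := by rw [← hta]; exact hq
      have haa : (0:ℝ) < a^2*L := by positivity
      nlinarith [hq', haa, sq_nonneg δ]
    have hAδ : Anorm i * |δ| ≤ 2 / L := by
      rcases eq_or_ne t 0 with h0 | h0
      · have hd0 : δ = 0 := by rw [hδdef, h0, zero_div]
        rw [hd0]; simp; positivity
      · have hξtabs : -(ξ*t) ≤ |t| := by
          calc -(ξ*t) ≤ |ξ * t| := neg_le_abs _
            _ = |ξ| * |t| := abs_mul _ _
            _ ≤ 1 * |t| := mul_le_mul_of_nonneg_right hξ1 (abs_nonneg t)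
            _ = |t| := one_mul _
        have h1 : Anorm i * (|t| * |t|) ≤ 2 * a * |t| := by
          rw [abs_mul_abs_self]
          nlinarith [hq, mul_le_mul_of_nonneg_left hξtabs (by linarith : (0:ℝ) ≤ 2*a)]
        have htpos : 0 < |t| := abs_pos.mpr h0
        have hAt : Anorm i * |t| ≤ 2 * a := by nlinarith [h1, htpos]
        have e : |δ| = |t|/(a*L) := by rw [hδdef, abs_div, abs_of_pos haL]
        rw [e, mul_div_assoc', div_le_div_iff₀ haL hLpos]
        nlinarith [mul_le_mul_of_nonneg_right hAt hLpos.le]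
    have hTlb' := hTlb (hujc1 hAδ)
    have hDlb : (1/4) * (-(ξ * (μ * c))) ≤ -(μ*c) + μ * T := by
      have h1 := mul_le_mul_of_nonneg_left hTlb' hμ.le
      have h2 : 0 ≤ Anorm i * c^2 * μ :=
        mul_nonneg (mul_nonneg (hAn i).le (sq_nonneg c)) hμ.le
      have hL5 : Anorm i * L * (μ*c)^2 ≤ 2 * (-(ξ * (μ*c))) := by rw [← hδc]; exact hLd2
      have e4 : Anorm i * L * (μ*c)^2 = 4 * (Anorm i * (μ * c^2)) := by
        calc Anorm i * L * (μ*c)^2 = (μ*L) * (Anorm i * (μ * c^2)) := by ring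
          _ = 4 * (Anorm i * (μ * c^2)) := by rw [hμL]
      have hL6 : Anorm i * (μ * c^2) ≤ (1/2) * (-(ξ * (μ * c))) := by
        rw [e4] at hL5; linarith
      have hSξ : S = 1 - ξ := by rw [hSg, hξg]
      have hscd : μ * (S * c) = μ*c - ξ*(μ*c) := by rw [hSξ]; ring
      have hE1 : (3/4)*((Anorm i * c^2) * S) * μ ≤ (3/2)*(Anorm i * (μ*c^2)) := by
        nlinarith only [mul_le_mul_of_nonneg_left hS2 (by linarith only [h2] : (0:ℝ) ≤ (3/4)*(Anorm i * c^2 * μ))]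
      linarith only [h1, hscd, hE1, hL6]
    rw [hηz, hδc]
    have hgoal2 : a^2 * L * ξ * (x i - (x i + μ*c)) = a^2*L*(-(ξ*(μ*c))) := by ring
    have h8 : (0:ℝ) ≤ -(ξ*(μ*c)) := by
      nlinarith only [mul_nonneg hμ.le (neg_nonneg.2 hξc)]
    have hfin1 : 8*a*L*((1/4) * (-(ξ * (μ * c)))) ≤ 8*a*L*(-(μ*c) + μ * T) :=
      mul_le_mul_of_nonneg_left hDlb (by positivity)
    have hfin2 : (0:ℝ) ≤ a*L*(-(ξ*(μ*c)))*(2 - a) :=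
      mul_nonneg (mul_nonneg (mul_nonneg ha0.le hLpos.le) h8) (by linarith)
    linarith only [hfin1, hfin2]
  · -- ξ = -1, η = g + 1 ≤ 0
    have hξg : ξ = -1 := by rw [hξ]; exact max_eq_right hcase.le
    have hηg : η = g + 1 := by rw [hη, hξg]; ring
    have hηneg : η ≤ 0 := by rw [hηg]; linarith
    have hSη : S = 2 - η := by rw [hSg, hηg]; ring
    have hq2 : Anorm i * t^2 ≤ 2*a*t := by
      have h := hq; rw [hξg] at h; linarith only [h]
    have ht0 : 0 ≤ t := by
      nlinarith only [hq2, mul_nonneg (hAn i).le (sq_nonneg t), ha0]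
    have hδ0 : 0 ≤ δ := by rw [hδdef]; exact div_nonneg ht0 haL.le
    have hc0 : 0 ≤ c := by rw [hcdef]; exact div_nonneg hδ0 hμ.le
    have hAt : Anorm i * t ≤ 2*a := by
      rcases eq_or_lt_of_le ht0 with h0 | h0
      · rw [← h0, mul_zero]; linarith only [ha0]
      · nlinarith only [hq2, h0]
    have hAδ : Anorm i * |δ| ≤ 2/L := by
      rw [abs_of_nonneg hδ0, hδdef, mul_div_assoc', div_le_div_iff₀ haL hLpos]
      nlinarith only [mul_le_mul_of_nonneg_right hAt hLpos.le]
    have hTlb' := hTlb (hujc1 hAδ)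
    have hAc : Anorm i * c ≤ 1/2 := by
      have h1 : Anorm i * |δ| ≤ μ/2 := by rw [← h2L]; exact hAδ
      rw [abs_of_nonneg hδ0, hδc] at h1
      nlinarith only [h1, hμ]
    have hq3 : (3/4)*((Anorm i * c^2)*S) ≤ (3/8)*(S*c) := by
      nlinarith only [mul_le_mul_of_nonneg_right hAc (mul_nonneg hc0 hS0)]
    have hT2 : (5/8)*(S*c) ≤ T := by nlinarith only [hTlb', hq3]
    have hscd : μ*(S*c) = 2*(μ*c) - η*(μ*c) := by rw [hSη]; ring
    have hDlb : (1/4)*(μ*c) + (5/8)*(-η)*(μ*c) ≤ -(μ*c) + μ*T := by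
      have h1 := mul_le_mul_of_nonneg_left hT2 hμ.le
      nlinarith only [h1, hscd]
    -- lower bound on t
    have hBz : 0 ≤ 3/Anorm i - zbar i := by linarith only [(hzbar i).2]
    have haAn : 0 < a/Anorm i := div_pos ha0 (hAn i)
    set t0 : ℝ := min (a/Anorm i) (3/Anorm i - zbar i) with ht0def
    have ht00 : 0 ≤ t0 := le_min haAn.le hBz
    clear_value t0
    have hms := hmin1d (zbar i + t0)
      (by linarith only [(hzbar i).1, ht00])
      (by rw [ht0def]; linarith only [min_le_right (a/Anorm i) (3/Anorm i - zbar i)])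
    have e1 : zbar i - z' i = -t := by rw [htdef]; ring
    have e2 : z' i = zbar i + t := by rw [htdef]; ring
    have e3 : zbar i - (zbar i + t0) = -t0 := by ring
    rw [e1, e2, e3, hξg] at hms
    have hAnt0 : Anorm i * t0 ≤ a := by
      calc Anorm i * t0 ≤ Anorm i * (a/Anorm i) :=
            mul_le_mul_of_nonneg_left (by rw [ht0def]; exact min_le_left _ _) (hAn i).le
        _ = a := by rw [mul_comm, div_mul_cancel₀ a (hAn i).ne']
    have htt0 : t0 ≤ t := by
      by_contra hcon
      push_neg at hcon
      have p1 : Anorm i * t < Anorm i * t0 := by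
        exact mul_lt_mul_of_pos_left hcon (hAn i)
      have q1 := mul_le_mul_of_nonneg_left hAnt0 (le_of_lt (sub_pos.2 hcon))
      have q2 := mul_lt_mul_of_pos_left p1 (sub_pos.2 hcon)
      nlinarith only [hms, q1, q2]
    have hreg : a*(u i - zbar i) ≤ 3*t := by
      rcases min_cases (a/Anorm i) (3/Anorm i - zbar i) with ⟨he, hle⟩ | ⟨he, hle⟩
      · have h1 : a/Anorm i ≤ t := by rw [ht0def, he] at htt0; exact htt0
        have h3 : a*(u i) ≤ a*(3/Anorm i) := mul_le_mul_of_nonneg_left (hu i).2 ha0.le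
        have h4 : a*(3/Anorm i) = 3*(a/Anorm i) := by ring
        nlinarith only [h1, h3, h4, mul_nonneg ha0.le (hzbar i).1]
      · have h1 : 3/Anorm i - zbar i ≤ t := by rw [ht0def, he] at htt0; exact htt0
        rcases le_total (u i - zbar i) 0 with h2 | h2
        · nlinarith only [mul_nonneg ha0.le (neg_nonneg.2 h2), ht0]
        · have h3 : u i - zbar i ≤ t := by linarith only [h1, (hu i).2]
          nlinarith only [mul_le_mul_of_nonneg_right ha1 h2, h3, ht0]
    have hnη : 0 ≤ -η := by linarith only [hηneg]
    have htμ : t = a*L*(μ*c) := by rw [hta, hδc]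
    have hregη : a*η*(zbar i - u i) ≤ 3*(-η)*(a*L*(μ*c)) := by
      rw [← htμ]
      nlinarith only [mul_le_mul_of_nonneg_left hreg hnη]
    rw [hξg, hδc]
    have hfin1 : 8*a*L*((1/4)*(μ*c) + (5/8)*(-η)*(μ*c)) ≤ 8*a*L*(-(μ*c) + μ*T) :=
      mul_le_mul_of_nonneg_left hDlb (by positivity)
    have hmc0 : 0 ≤ μ*c := mul_nonneg hμ.le hc0
    have hfin2 : (0:ℝ) ≤ a*L*(μ*c)*(2-a) :=
      mul_nonneg (mul_nonneg (mul_nonneg ha0.le hLpos.le) hmc0) (by linarith only [ha1])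
    have hfin3 : (0:ℝ) ≤ a*L*(μ*c)*(-η)*2 :=
      mul_nonneg (mul_nonneg (mul_nonneg (mul_nonneg ha0.le hLpos.le) hmc0) hnη) (by norm_num)
    linarith only [hregη, hfin1, hfin2, hfin3]
end

section
/- Let m, n ≥ 1, let A ∈ ℝ_{≥0}^{m×n} have every column nonzero and be normalized so that min_{j∈[m]} max_{i∈[n]} A_{ji} = 1, let opt be the optimal value of the covering LP given by A, let ε ∈ (0, 1/2], and set μ = ε/(4 log(nm/ε)). Let x* be an optimal solution of the covering LP satisfying 0 ≤ x*_i ≤ 2/‖A_{:i}‖_∞ for all i, and set u* = (1 + ε/2)x*. Suppose x^# satisfies Ax^# ≥ 𝟙, 𝟙ᵀx^# ≤ 2·opt, and 0 ≤ x^#_i ≤ 2/‖A_{:i}‖_∞ for all i, and set x^start = (1 + ε/2)x^#. Then: (i) x^start ∈ Δ; (ii) f_μ(x^start) ≤ 4·opt; and (iii) V_{x^start}(u*) ≤ 6·opt, where V_x(y) = ½Σ_i ‖A_{:i}‖_∞(x_i − y_i)² and f_μ(x) = 𝟙ᵀx + μΣ_{j=1}^m exp((1 − (Ax)_j)/μ).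 -/
set_option maxHeartbeats 800000 in
/-- Good starting point: scaling a `2`-approximation `x^#` (with coordinate bounds
`x^#_i ≤ 2/‖A_{:i}‖_∞`) by `1 + ε/2` yields `x^start ∈ Δ` with `f_μ(x^start) ≤ 4·opt` and
`V_{x^start}(u*) ≤ 6·opt`, where `u* = (1 + ε/2)x*`. -/
theorem good_starting_point
    (m n : ℕ) (hm : 0 < m) (hn : 0 < n)
    (A : Matrix (Fin m) (Fin n) ℝ) (hA : ∀ j i, 0 ≤ A j i)
    (hcol : ∀ i, ∃ j, 0 < A j i)
    (Anorm : Fin n → ℝ)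
    (hAnorm : ∀ i, IsGreatest {a : ℝ | ∃ j, A j i = a} (Anorm i))
    (hnorm : (Finset.univ.inf' ⟨⟨0, hm⟩, Finset.mem_univ _⟩
        fun j => Finset.univ.sup' ⟨⟨0, hn⟩, Finset.mem_univ _⟩ fun i => A j i) = 1)
    (opt : ℝ)
    (hopt : IsLeast {c : ℝ | ∃ x : Fin n → ℝ, (∀ i, 0 ≤ x i) ∧
      (∀ j, 1 ≤ ∑ i, A j i * x i) ∧ c = ∑ i, x i} opt)
    (ε : ℝ) (hε0 : 0 < ε) (hε1 : ε ≤ 1/2)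
    (μ : ℝ) (hμ : μ = ε / (4 * Real.log ((n : ℝ) * m / ε)))
    (xstar : Fin n → ℝ) (hxs0 : ∀ i, 0 ≤ xstar i)
    (hxsf : ∀ j, 1 ≤ ∑ i, A j i * xstar i)
    (hxsopt : ∑ i, xstar i = opt)
    (hxsb : ∀ i, xstar i ≤ 2 / Anorm i)
    (xsharp : Fin n → ℝ) (hsh0 : ∀ i, 0 ≤ xsharp i)
    (hshf : ∀ j, 1 ≤ ∑ i, A j i * xsharp i)
    (hsh2 : ∑ i, xsharp i ≤ 2 * opt)
    (hshb : ∀ i, xsharp i ≤ 2 / Anorm i)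
    (xstart ustar : Fin n → ℝ)
    (hstart : xstart = (1 + ε/2) • xsharp)
    (hustar : ustar = (1 + ε/2) • xstar) :
    (∀ i, 0 ≤ xstart i ∧ xstart i ≤ 3 / Anorm i) ∧
    (∑ i, xstart i) + μ * ∑ j, Real.exp ((1 - ∑ i, A j i * xstart i) / μ) ≤ 4 * opt ∧
    (1/2) * ∑ i, Anorm i * (xstart i - ustar i)^2 ≤ 6 * opt := by
  have hApos : ∀ i, 0 < Anorm i := fun i => by
    obtain ⟨j, hj⟩ := hcol i
    exact lt_of_lt_of_le hj ((hAnorm i).2 ⟨j, rfl⟩)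
  have hn1 : (1:ℝ) ≤ (n:ℝ) := by exact_mod_cast hn
  have hm1 : (1:ℝ) ≤ (m:ℝ) := by exact_mod_cast hm
  -- opt ≥ 1
  have hex := Finset.exists_mem_eq_inf' (s := (Finset.univ : Finset (Fin m)))
      ⟨⟨0, hm⟩, Finset.mem_univ _⟩
      (fun j => Finset.univ.sup' ⟨⟨0, hn⟩, Finset.mem_univ _⟩ fun i => A j i)
  obtain ⟨j0, -, hj0⟩ := hex
  rw [hnorm] at hj0
  have hrow : ∀ i, A j0 i ≤ 1 := fun i => by
    have h := Finset.le_sup' (fun i => A j0 i) (Finset.mem_univ i)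
    rw [← hj0] at h; exact h
  have hopt1 : 1 ≤ opt := by
    have h1 := hxsf j0
    have h2 : ∑ i, A j0 i * xstar i ≤ ∑ i, xstar i :=
      Finset.sum_le_sum fun i _ => by nlinarith [hxs0 i, hrow i, hA j0 i]
    rw [hxsopt] at h2; linarith
  -- log facts
  set L := Real.log ((n : ℝ) * m / ε) with hL
  have hnm1 : (1:ℝ) ≤ (n:ℝ) * m := by nlinarith
  have hnm0 : (0:ℝ) < (n:ℝ) * m := by linarith
  have hnm2 : (2:ℝ) ≤ (n:ℝ) * m / ε := by rw [le_div_iff₀ hε0]; nlinarith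
  have hL2 : (1:ℝ)/2 < L := by
    have h2 : Real.log 2 ≤ L := Real.log_le_log (by norm_num) hnm2
    have := Real.log_two_gt_d9
    linarith
  have hLpos : 0 < L := by linarith
  have hμpos : 0 < μ := by rw [hμ]; positivity
  have hμle : μ ≤ ε / 2 := by
    rw [hμ]
    exact div_le_div_of_nonneg_left hε0.le (by norm_num) (by linarith)
  -- exponential bound
  have hexpL : Real.exp L = (n:ℝ) * m / ε := Real.exp_log (by linarith)
  have hexpneg : Real.exp (-(2*L)) = (ε / ((n:ℝ)*m))^2 := by
    rw [show (2:ℝ)*L = L + L by ring, Real.exp_neg, Real.exp_add, hexpL]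
    field_simp
  have hexpj : ∀ j, Real.exp ((1 - ∑ i, A j i * xstart i) / μ) ≤ (ε / ((n:ℝ)*m))^2 := by
    intro j
    rw [← hexpneg]
    apply Real.exp_le_exp.mpr
    have hsum : ∑ i, A j i * xstart i = (1 + ε/2) * ∑ i, A j i * xsharp i := by
      rw [hstart, Finset.mul_sum]
      exact Finset.sum_congr rfl fun i _ => by
        simp only [Pi.smul_apply, smul_eq_mul]; ring
    have h1 : 1 + ε/2 ≤ ∑ i, A j i * xstart i := by
      rw [hsum]; nlinarith [hshf j]
    have h2 : (1 - ∑ i, A j i * xstart i) / μ ≤ (-(ε/2)) / μ :=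
      (div_le_div_iff_of_pos_right hμpos).mpr (by linarith)
    have h3 : (-(ε/2)) / μ = -(2*L) := by
      rw [hμ]; field_simp; ring
    linarith [h3 ▸ h2]
  -- sum of exponentials
  have hSle : ∑ j, Real.exp ((1 - ∑ i, A j i * xstart i) / μ) ≤ (m:ℝ) * (ε / ((n:ℝ)*m))^2 := by
    calc ∑ j, Real.exp ((1 - ∑ i, A j i * xstart i) / μ)
        ≤ ∑ _j : Fin m, (ε / ((n:ℝ)*m))^2 := Finset.sum_le_sum fun j _ => hexpj j
      _ = (m:ℝ) * (ε / ((n:ℝ)*m))^2 := by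
          rw [Finset.sum_const, Finset.card_univ, Fintype.card_fin, nsmul_eq_mul]
  have hmc : (m:ℝ) * (ε / ((n:ℝ)*m))^2 ≤ ε^2 := by
    have t1 : (m:ℝ) ≤ ((n:ℝ)*m)^2 := by nlinarith
    have h : (ε / ((n:ℝ)*m))^2 = ε^2 / ((n:ℝ)*m)^2 := div_pow ε _ 2
    rw [h, ← mul_div_assoc, div_le_iff₀ (by positivity)]
    nlinarith [mul_le_mul_of_nonneg_left t1 (sq_nonneg ε)]
  have hSnn : 0 ≤ ∑ j, Real.exp ((1 - ∑ i, A j i * xstart i) / μ) :=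
    Finset.sum_nonneg fun j _ => (Real.exp_pos _).le
  have hμS : μ * ∑ j, Real.exp ((1 - ∑ i, A j i * xstart i) / μ) ≤ 1/16 := by
    have hS : ∑ j, Real.exp ((1 - ∑ i, A j i * xstart i) / μ) ≤ ε^2 := le_trans hSle hmc
    nlinarith [sq_nonneg ε]
  have hstartsum : ∑ i, xstart i = (1 + ε/2) * ∑ i, xsharp i := by
    rw [hstart, Finset.mul_sum]
    exact Finset.sum_congr rfl fun i _ => by simp [smul_eq_mul]
  have hshnn : 0 ≤ ∑ i, xsharp i := Finset.sum_nonneg fun i _ => hsh0 i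
  refine ⟨?_, ?_, ?_⟩
  · intro i
    have ha := hApos i
    have hb2 : xsharp i * Anorm i ≤ 2 := (le_div_iff₀ ha).mp (hshb i)
    constructor
    · rw [hstart]; simp only [Pi.smul_apply, smul_eq_mul]
      exact mul_nonneg (by linarith) (hsh0 i)
    · rw [hstart]; simp only [Pi.smul_apply, smul_eq_mul]
      rw [le_div_iff₀ ha]
      have h := mul_le_mul_of_nonneg_left hb2 (show (0:ℝ) ≤ 1 + ε/2 by linarith)
      nlinarith [h]
  · rw [hstartsum]
    nlinarith [mul_nonneg (show (0:ℝ) ≤ 1/2 - ε by linarith) (show (0:ℝ) ≤ opt by linarith)]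
  · have hpt : ∀ i, Anorm i * (xsharp i - xstar i)^2 ≤ 2*(xsharp i + xstar i) := by
      intro i
      have ha := hApos i
      have hb2 : xsharp i * Anorm i ≤ 2 := (le_div_iff₀ ha).mp (hshb i)
      have hc2 : xstar i * Anorm i ≤ 2 := (le_div_iff₀ ha).mp (hxsb i)
      nlinarith [hsh0 i, hxs0 i,
        mul_le_mul_of_nonneg_left hb2 (hsh0 i),
        mul_le_mul_of_nonneg_left hc2 (hxs0 i),
        mul_nonneg (mul_nonneg ha.le (hsh0 i)) (hxs0 i)]
    have heq : (1/2) * ∑ i, Anorm i * (xstart i - ustar i)^2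
        = ((1+ε/2)^2/2) * ∑ i, Anorm i * (xsharp i - xstar i)^2 := by
      rw [hstart, hustar, Finset.mul_sum, Finset.mul_sum]
      exact Finset.sum_congr rfl fun i _ => by
        simp only [Pi.smul_apply, smul_eq_mul]; ring
    have hX0 : 0 ≤ ∑ i, Anorm i * (xsharp i - xstar i)^2 :=
      Finset.sum_nonneg fun i _ => mul_nonneg (hApos i).le (sq_nonneg _)
    have hXle : ∑ i, Anorm i * (xsharp i - xstar i)^2 ≤ 6 * opt := by
      calc ∑ i, Anorm i * (xsharp i - xstar i)^2
          ≤ ∑ i, 2*(xsharp i + xstar i) := Finset.sum_le_sum fun i _ => hpt i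
        _ = 2*((∑ i, xsharp i) + ∑ i, xstar i) := by
            rw [← Finset.sum_add_distrib, Finset.mul_sum]
        _ ≤ 6 * opt := by rw [hxsopt]; linarith
    rw [heq]
    nlinarith [mul_le_mul_of_nonneg_right
      (show (1+ε/2)^2/2 ≤ 1 by nlinarith) hX0]
end
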